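/- arXiv:1008.3690 — 6 statements merged into one kernel-verified Lean document; each statement's English description precedes it below -/
import Mathlib

section
/- Let d ≥ 2 and let F(x,y) be a polynomial of degree at most d that belongs to the ideal of ℂ[x,y] generated by x^{d-1} - 1 and y^{d-1} - 1. Then there exist polynomials α(x,y) and β(x,y) of degree at most 1 (affine polynomials) such that F(x,y) = α(x,y)(x^{d-1} - 1) + β(x,y)(y^{d-1} - 1). -/
open MvPolynomial

namespace Stmt0Aux

noncomputable section

/-- exponent vector with value `i` at `u` and `j` at `v`. -/
def fe (u v : Fin 2) (i j : ℕ) : Fin 2 →₀ ℕ := Finsupp.single u i + Finsupp.single v j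

lemma fe_apply_u {u v : Fin 2} (huv : u ≠ v) (i j : ℕ) : fe u v i j u = i := by
  simp [fe, Finsupp.single_apply, (Ne.symm huv : v ≠ u)]

lemma fe_apply_v {u v : Fin 2} (huv : u ≠ v) (i j : ℕ) : fe u v i j v = j := by
  simp [fe, Finsupp.single_apply, huv]

lemma fe_inj {u v : Fin 2} (huv : u ≠ v) {i j i' j' : ℕ} :
    fe u v i j = fe u v i' j' ↔ i = i' ∧ j = j' := by
  constructor
  · intro h
    constructor
    · rw [← fe_apply_u huv i j, h, fe_apply_u huv]
    · rw [← fe_apply_v huv i j, h, fe_apply_v huv]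
  · rintro ⟨rfl, rfl⟩; rfl

lemma fe_comm (u v : Fin 2) (i j : ℕ) : fe u v i j = fe v u j i := add_comm _ _

lemma fe_eq (m : Fin 2 →₀ ℕ) : fe 0 1 (m 0) (m 1) = m := by
  ext k
  fin_cases k <;> simp [fe, Finsupp.single_apply]

lemma fe_sub {u v : Fin 2} (huv : u ≠ v) (i j n : ℕ) :
    fe u v i j - Finsupp.single u n = fe u v (i - n) j := by
  ext k
  rw [Finsupp.tsub_apply]
  by_cases hk : k = u
  · rw [hk]
    simp [fe, Finsupp.single_apply, (show v ≠ u from Ne.symm huv)]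
  · simp [fe, Finsupp.single_apply, (show u ≠ k from Ne.symm hk)]

lemma fe_degree (u v : Fin 2) (i j : ℕ) : ((fe u v i j).sum fun _ e => e) = i + j := by
  rw [fe, Finsupp.sum_add_index' (fun _ => rfl) (fun _ _ _ => rfl),
    Finsupp.sum_single_index rfl, Finsupp.sum_single_index rfl]

lemma coeff_zero_of_tdeg {u v : Fin 2} {G : MvPolynomial (Fin 2) ℂ} {N : ℕ}
    (hG : G.totalDegree ≤ N) {i j : ℕ} (h : N < i + j) : coeff (fe u v i j) G = 0 := by
  apply coeff_eq_zero_of_totalDegree_lt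
  calc G.totalDegree ≤ N := hG
    _ < i + j := h
    _ = (fe u v i j).sum fun _ e => e := (fe_degree u v i j).symm
    _ = _ := rfl

lemma tdeg_sub (a b : MvPolynomial (Fin 2) ℂ) :
    (a - b).totalDegree ≤ max a.totalDegree b.totalDegree := by
  rw [sub_eq_add_neg]
  exact (totalDegree_add a (-b)).trans (by rw [totalDegree_neg])

lemma tdeg_monomial_le (u v : Fin 2) (i j : ℕ) (a : ℂ) :
    (monomial (fe u v i j) a).totalDegree ≤ i + j := by
  refine le_trans (totalDegree_monomial_le _ _) ?_
  simp only [Function.id_def]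
  exact le_of_eq (fe_degree u v i j)

lemma coeff_formula {u v : Fin 2} (huv : u ≠ v) (n : ℕ) (G α : MvPolynomial (Fin 2) ℂ)
    (i j : ℕ) :
    coeff (fe u v i j) (G - α * (X u ^ n - 1)) =
      coeff (fe u v i j) G - (if n ≤ i then coeff (fe u v (i - n) j) α else 0)
        + coeff (fe u v i j) α := by
  have h1 : G - α * (X u ^ n - 1) = G - α * X u ^ n + α := by ring
  rw [h1, coeff_add, coeff_sub, X_pow_eq_monomial, coeff_mul_monomial']
  by_cases h : n ≤ i
  · rw [if_pos (Finsupp.single_le_iff.mpr (by rw [fe_apply_u huv]; exact h)), if_pos h,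
      fe_sub huv i j n, mul_one]
  · rw [if_neg (fun hc => h (by simpa [fe_apply_u huv] using Finsupp.single_le_iff.mp hc)),
      if_neg h]

set_option maxHeartbeats 2000000 in
lemma reduce (n : ℕ) (hn : 1 ≤ n) (u v : Fin 2) (huv : u ≠ v) (G : MvPolynomial (Fin 2) ℂ)
    (hG : G.totalDegree ≤ n + 1) :
    ∃ α : MvPolynomial (Fin 2) ℂ, α.totalDegree ≤ 1 ∧
      (G - α * (X u ^ n - 1)).totalDegree ≤ n + 1 ∧
      (∀ i j, n ≤ i → coeff (fe u v i j) (G - α * (X u ^ n - 1)) = 0) ∧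
      ((∀ i j, n ≤ j → coeff (fe u v i j) G = 0) →
        ∀ i j, n ≤ j → coeff (fe u v i j) (G - α * (X u ^ n - 1)) = 0) := by
  set c : ℕ → ℕ → ℂ := fun i j => coeff (fe u v i j) G with hc
  set α : MvPolynomial (Fin 2) ℂ :=
    monomial (fe u v 0 0) (c n 0 + if n = 1 then c (n + 1) 0 else 0)
      + monomial (fe u v 0 1) (c n 1) + monomial (fe u v 1 0) (c (n + 1) 0) with hα
  have hc0 : ∀ i j, n + 1 < i + j → c i j = 0 := fun i j h => coeff_zero_of_tdeg hG h
  have cα : ∀ i' j', coeff (fe u v i' j') α =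
      (if i' = 0 ∧ j' = 0 then c n 0 + (if n = 1 then c (n + 1) 0 else 0) else 0)
        + (if i' = 0 ∧ j' = 1 then c n 1 else 0)
        + (if i' = 1 ∧ j' = 0 then c (n + 1) 0 else 0) := by
    intro i' j'
    have e1 : (fe u v 0 0 = fe u v i' j') ↔ (i' = 0 ∧ j' = 0) := by
      rw [fe_inj huv]; constructor <;> rintro ⟨h1, h2⟩ <;> exact ⟨h1.symm, h2.symm⟩
    have e2 : (fe u v 0 1 = fe u v i' j') ↔ (i' = 0 ∧ j' = 1) := by
      rw [fe_inj huv]; constructor <;> rintro ⟨h1, h2⟩ <;> exact ⟨h1.symm, h2.symm⟩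
    have e3 : (fe u v 1 0 = fe u v i' j') ↔ (i' = 1 ∧ j' = 0) := by
      rw [fe_inj huv]; constructor <;> rintro ⟨h1, h2⟩ <;> exact ⟨h1.symm, h2.symm⟩
    rw [hα, coeff_add, coeff_add, coeff_monomial, coeff_monomial, coeff_monomial]
    simp only [e1, e2, e3]
  have hcc : ∀ i j, coeff (fe u v i j) G = c i j := fun _ _ => rfl
  have hα1 : α.totalDegree ≤ 1 := by
    refine le_trans (totalDegree_add _ _) (max_le (le_trans (totalDegree_add _ _)
      (max_le ?_ ?_)) ?_) <;>
    exact le_trans (tdeg_monomial_le _ _ _ _ _) (by omega)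
  refine ⟨α, hα1, ?_, ?_, ?_⟩
  · refine le_trans (tdeg_sub _ _) (max_le hG ?_)
    refine le_trans (totalDegree_mul _ _) ?_
    have : (X u ^ n - 1 : MvPolynomial (Fin 2) ℂ).totalDegree ≤ n := by
      refine le_trans (tdeg_sub _ _) (max_le ?_ ?_)
      · rw [totalDegree_X_pow]
      · rw [totalDegree_one]; omega
    omega
  · intro i j hi
    rw [coeff_formula huv, if_pos hi, cα, cα, hcc]
    rcases Nat.lt_or_ge (i + j) (n + 2) with hij | hij
    · have hij2 : (i = n ∧ j ≤ 1) ∨ (i = n + 1 ∧ j = 0) := by omega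
      rcases hij2 with ⟨rfl, hj1⟩ | ⟨rfl, rfl⟩
      · interval_cases j <;> split_ifs
        all_goals try (exfalso; omega)
        all_goals try simp_all
        all_goals ring
      · split_ifs
        all_goals try (exfalso; omega)
        all_goals try simp_all
        all_goals ring
    · rw [hc0 i j hij]
      split_ifs
      all_goals try (exfalso; omega)
      all_goals try simp_all
      all_goals ring
  · intro hvb i j hj
    have hvb' : ∀ i j, n ≤ j → c i j = 0 := fun i j h => (hcc i j).symm.trans (hvb i j h)
    rw [coeff_formula huv, cα, cα, hcc, hvb' i j hj]
    split_ifs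
    all_goals try (exfalso; omega)
    all_goals try simp_all
    all_goals try (rw [hvb' n 1 (by omega)])
    all_goals ring

lemma rootcount (n : ℕ) (hn : 1 ≤ n) (p : Polynomial ℂ) (hdeg : p.natDegree < n)
    (hv : ∀ z : ℂ, z ^ n = 1 → p.eval z = 0) : p = 0 := by
  apply Polynomial.eq_zero_of_natDegree_lt_card_of_eval_eq_zero' p
    (Polynomial.nthRootsFinset n (1 : ℂ))
    (fun z hz => hv z ((Polynomial.mem_nthRootsFinset (by omega) (1 : ℂ)).mp hz))
  rw [(Complex.isPrimitiveRoot_exp n (by omega)).card_nthRootsFinset]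
  exact hdeg

lemma vanish (n : ℕ) (hn : 1 ≤ n) (S : MvPolynomial (Fin 2) ℂ)
    (hx : ∀ i j, n ≤ i → coeff (fe 0 1 i j) S = 0)
    (hy : ∀ i j, n ≤ j → coeff (fe 0 1 i j) S = 0)
    (hz : ∀ a b : ℂ, a ^ n = 1 → b ^ n = 1 → eval ![a, b] S = 0) : S = 0 := by
  classical
  set c : ℕ → ℕ → ℂ := fun i j => coeff (fe 0 1 i j) S with hcdef
  have hrep : S = ∑ i ∈ Finset.range n, ∑ j ∈ Finset.range n, monomial (fe 0 1 i j) (c i j) := by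
    apply MvPolynomial.ext
    intro m
    rw [coeff_sum]
    simp_rw [coeff_sum, coeff_monomial]
    have hm : fe 0 1 (m 0) (m 1) = m := fe_eq m
    have h01 : (0 : Fin 2) ≠ 1 := by decide
    rw [← hm]
    by_cases h0 : m 0 < n ∧ m 1 < n
    · obtain ⟨h0a, h0b⟩ := h0
      rw [Finset.sum_eq_single_of_mem (m 0) (Finset.mem_range.mpr h0a),
        Finset.sum_eq_single_of_mem (m 1) (Finset.mem_range.mpr h0b), if_pos rfl]
      all_goals intro x' hx' hne
      all_goals first
        | exact Finset.sum_eq_zero fun x1 _ => if_neg (fun hcon => hne ((fe_inj h01).mp hcon).1)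
        | exact if_neg (fun hcon => hne ((fe_inj h01).mp hcon).2)
    · have hS0 : coeff (fe 0 1 (m 0) (m 1)) S = 0 := by
        by_cases h1 : n ≤ m 0
        · exact hx _ _ h1
        · exact hy _ _ (by omega)
      rw [hS0]
      symm
      apply Finset.sum_eq_zero; intro i hi
      apply Finset.sum_eq_zero; intro j hj
      rw [if_neg]
      intro hc
      obtain ⟨rfl, rfl⟩ := (fe_inj h01).mp hc
      simp only [Finset.mem_range] at hi hj
      omega
  have heval : ∀ a b : ℂ, eval ![a, b] S =
      ∑ i ∈ Finset.range n, ∑ j ∈ Finset.range n, c i j * (a ^ i * b ^ j) := by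
    intro a b
    conv_lhs => rw [hrep]
    rw [map_sum]
    refine Finset.sum_congr rfl fun i _ => ?_
    rw [map_sum]
    refine Finset.sum_congr rfl fun j _ => ?_
    rw [eval_monomial]
    congr 1
    rw [fe, Finsupp.prod_add_index' (fun k => pow_zero _) (fun k b1 b2 => pow_add _ _ _)]
    rw [Finsupp.prod_single_index, Finsupp.prod_single_index]
    all_goals simp
  have key : ∀ i ∈ Finset.range n, ∀ j ∈ Finset.range n, c i j = 0 := by
    intro i0 hi0 j0 hj0
    set q : Polynomial ℂ :=
      ∑ j ∈ Finset.range n, Polynomial.C (c i0 j) * Polynomial.X ^ j with hq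
    have hq0 : q = 0 := by
      apply rootcount n hn
      · have : q.natDegree ≤ n - 1 := by
          apply Polynomial.natDegree_sum_le_of_forall_le
          intro j hj
          exact le_trans (Polynomial.natDegree_C_mul_X_pow_le _ _)
            (by simp at hj; omega)
        omega
      · intro b hb
        set p : Polynomial ℂ := ∑ i ∈ Finset.range n,
          Polynomial.C (∑ j ∈ Finset.range n, c i j * b ^ j) * Polynomial.X ^ i with hp
        have hp0 : p = 0 := by
          apply rootcount n hn
          · have : p.natDegree ≤ n - 1 := by
              apply Polynomial.natDegree_sum_le_of_forall_le
              intro i hi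
              exact le_trans (Polynomial.natDegree_C_mul_X_pow_le _ _)
                (by simp at hi; omega)
            omega
          · intro a ha
            rw [hp, Polynomial.eval_finset_sum]
            have : ∀ i ∈ Finset.range n,
                Polynomial.eval a (Polynomial.C (∑ j ∈ Finset.range n, c i j * b ^ j)
                  * Polynomial.X ^ i) = ∑ j ∈ Finset.range n, c i j * (a ^ i * b ^ j) := by
              intro i _
              rw [Polynomial.eval_mul, Polynomial.eval_C, Polynomial.eval_pow,
                Polynomial.eval_X, Finset.sum_mul]
              exact Finset.sum_congr rfl fun j _ => by ring
            rw [Finset.sum_congr rfl this, ← heval a b]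
            exact hz a b ha hb
        have hco : p.coeff i0 = ∑ j ∈ Finset.range n, c i0 j * b ^ j := by
          rw [hp, Polynomial.finset_sum_coeff]
          simp_rw [Polynomial.coeff_C_mul, Polynomial.coeff_X_pow, mul_ite, mul_one, mul_zero]
          rw [Finset.sum_ite_eq (Finset.range n) i0 (fun i => ∑ j ∈ Finset.range n, c i j * b ^ j),
            if_pos hi0]
        rw [hp0] at hco
        rw [hq, Polynomial.eval_finset_sum]
        have : ∀ j ∈ Finset.range n,
            Polynomial.eval b (Polynomial.C (c i0 j) * Polynomial.X ^ j) = c i0 j * b ^ j := by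
          intro j _
          rw [Polynomial.eval_mul, Polynomial.eval_C, Polynomial.eval_pow, Polynomial.eval_X]
        rw [Finset.sum_congr rfl this, ← hco, Polynomial.coeff_zero]
    have : q.coeff j0 = c i0 j0 := by
      rw [hq, Polynomial.finset_sum_coeff]
      simp_rw [Polynomial.coeff_C_mul, Polynomial.coeff_X_pow, mul_ite, mul_one, mul_zero]
      rw [Finset.sum_ite_eq (Finset.range n) j0 (fun j => c i0 j), if_pos hj0]
    rw [hq0, Polynomial.coeff_zero] at this
    exact this.symm
  rw [hrep]
  apply Finset.sum_eq_zero; intro i hi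
  apply Finset.sum_eq_zero; intro j hj
  rw [key i hi j hj, map_zero]

end

end Stmt0Aux

open Stmt0Aux in
/-- Lemma `ab`: a polynomial of degree ≤ d in the ideal generated by
`x^(d-1) - 1` and `y^(d-1) - 1` can be written with affine cofactors. -/
theorem stmt_0 (d : ℕ) (hd : 2 ≤ d) (F : MvPolynomial (Fin 2) ℂ)
    (hdeg : F.totalDegree ≤ d)
    (hF : F ∈ Ideal.span ({(X 0) ^ (d - 1) - 1, (X 1) ^ (d - 1) - 1} :
      Set (MvPolynomial (Fin 2) ℂ))) :
    ∃ α β : MvPolynomial (Fin 2) ℂ, α.totalDegree ≤ 1 ∧ β.totalDegree ≤ 1 ∧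
      F = α * ((X 0) ^ (d - 1) - 1) + β * ((X 1) ^ (d - 1) - 1) := by
  set n := d - 1 with hndef
  have hn : 1 ≤ n := by omega
  have hd' : d = n + 1 := by omega
  obtain ⟨α, hα1, hRdeg, hαx, -⟩ := reduce n hn 0 1 (by decide) F (by omega)
  set R := F - α * (X 0 ^ n - 1) with hRdef
  obtain ⟨β, hβ1, -, hβy, hβpres⟩ := reduce n hn 1 0 (by decide) R hRdeg
  set S := R - β * (X 1 ^ n - 1) with hSdef
  have hxR : ∀ i j, n ≤ j → coeff (fe 1 0 i j) R = 0 := by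
    intro i j hj
    rw [fe_comm]
    exact hαx j i hj
  have hSx : ∀ i j, n ≤ i → coeff (fe 0 1 i j) S = 0 := by
    intro i j hi
    rw [fe_comm]
    exact hβpres hxR j i hi
  have hSy : ∀ i j, n ≤ j → coeff (fe 0 1 i j) S = 0 := by
    intro i j hj
    rw [fe_comm]
    exact hβy j i hj
  have hSmem : S ∈ Ideal.span ({(X 0) ^ n - 1, (X 1) ^ n - 1} :
      Set (MvPolynomial (Fin 2) ℂ)) := by
    have h1 : α * (X 0 ^ n - 1) ∈ Ideal.span ({(X 0) ^ n - 1, (X 1) ^ n - 1} :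
        Set (MvPolynomial (Fin 2) ℂ)) :=
      Ideal.mul_mem_left _ _ (Ideal.subset_span (by simp))
    have h2 : β * (X 1 ^ n - 1) ∈ Ideal.span ({(X 0) ^ n - 1, (X 1) ^ n - 1} :
        Set (MvPolynomial (Fin 2) ℂ)) :=
      Ideal.mul_mem_left _ _ (Ideal.subset_span (by simp))
    exact Ideal.sub_mem _ (Ideal.sub_mem _ hF h1) h2
  have hS0 : S = 0 := by
    apply vanish n hn S hSx hSy
    intro a b ha hb
    obtain ⟨p, q, hpq⟩ := Ideal.mem_span_pair.mp hSmem
    rw [← hpq]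
    simp [ha, hb]
  refine ⟨α, β, hα1, hβ1, ?_⟩
  have : F - α * (X 0 ^ n - 1) - β * (X 1 ^ n - 1) = 0 := hS0
  linear_combination this
end

section
/- For a foliation F of degree d on the complex projective plane, the sum over i of i times the number of radial singularities of F of order i is at most (d+2)(d-1). -/
open MvPolynomial

noncomputable section StmtAux
open AddMonoidAlgebra

/-- Degree-lex order map. -/
def stmtD : (Fin 3 →₀ ℕ) → Lex (ℕ × Lex (Fin 3 →₀ ℕ)) :=
  fun m => toLex (m.sum fun _ e => e, toLex m)

lemma stmtD_inj : Function.Injective stmtD := by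
  intro a b h
  have := congrArg (fun x => ofLex (ofLex x).2) h
  simpa [stmtD] using this

lemma stmtD_add (a b : Fin 3 →₀ ℕ) : stmtD (a + b) = stmtD a + stmtD b := by
  unfold stmtD
  rw [Finsupp.sum_add_index' (fun _ => rfl) (fun _ _ _ => rfl)]
  rfl

lemma fst_stmtD_supDegree {p : MvPolynomial (Fin 3) ℂ} (hp : p ≠ 0) :
    (ofLex (AddMonoidAlgebra.supDegree stmtD p)).1 = p.totalDegree := by
  obtain ⟨a, ha, he⟩ := AddMonoidAlgebra.exists_supDegree_mem_support stmtD hp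
  apply le_antisymm
  · rw [he]
    exact Finset.le_sup (f := fun m => m.sum fun _ e => e) ha
  · apply Finset.sup_le
    intro m hm
    have h1 : stmtD m ≤ stmtD a := he ▸ Finset.le_sup hm
    rw [he]
    rcases Prod.Lex.le_iff.mp h1 with h | h
    · exact le_of_lt h
    · exact le_of_eq h.1

lemma totalDegree_mul_eq {p q : MvPolynomial (Fin 3) ℂ} (hp : p ≠ 0) (hq : q ≠ 0) :
    (p * q).totalDegree = p.totalDegree + q.totalDegree := by
  have hlc : AddMonoidAlgebra.leadingCoeff stmtD p * AddMonoidAlgebra.leadingCoeff stmtD q ≠ 0 :=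
    mul_ne_zero ((AddMonoidAlgebra.leadingCoeff_ne_zero stmtD_inj).mpr hp)
      ((AddMonoidAlgebra.leadingCoeff_ne_zero stmtD_inj).mpr hq)
  have hmul := AddMonoidAlgebra.supDegree_mul (D := stmtD) stmtD_inj stmtD_add hlc hp hq
  have hpq : p * q ≠ 0 := mul_ne_zero hp hq
  rw [← fst_stmtD_supDegree hp, ← fst_stmtD_supDegree hq, ← fst_stmtD_supDegree hpq, hmul]
  rfl

lemma prime_of_totalDegree_one {p : MvPolynomial (Fin 3) ℂ} (h : p.totalDegree = 1) :
    Prime p := by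
  have hp0 : p ≠ 0 := by rintro rfl; simp at h
  have hdeg_unit : ∀ u : MvPolynomial (Fin 3) ℂ, IsUnit u → u.totalDegree = 0 := by
    intro u hu
    obtain ⟨v, hv⟩ := isUnit_iff_exists_inv.mp hu
    have hu0 : u ≠ 0 := hu.ne_zero
    have hv0 : v ≠ 0 := by rintro rfl; simp at hv
    have := totalDegree_mul_eq hu0 hv0
    rw [hv, totalDegree_one] at this
    omega
  rw [← UniqueFactorizationMonoid.irreducible_iff_prime]
  constructor
  · intro hu
    have := hdeg_unit p hu
    omega
  · intro a b hab
    have ha0 : a ≠ 0 := by rintro rfl; simp [zero_mul] at hab; exact hp0 hab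
    have hb0 : b ≠ 0 := by rintro rfl; simp [mul_zero] at hab; exact hp0 hab
    have hsum : a.totalDegree + b.totalDegree = 1 := by
      rw [← totalDegree_mul_eq ha0 hb0, ← hab, h]
    have hC : ∀ r : MvPolynomial (Fin 3) ℂ, r ≠ 0 → r.totalDegree = 0 → IsUnit r := by
      intro r hr0 hr
      have hsupp : ∀ m ∈ r.support, m = 0 := by
        intro m hm
        ext x
        exact (MvPolynomial.totalDegree_eq_zero_iff _ r).mp hr m hm x
      have hrC : r = MvPolynomial.C (MvPolynomial.coeff 0 r) := by
        ext m
        rcases eq_or_ne m 0 with rfl | hm0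
        · simp
        · rw [MvPolynomial.coeff_C, if_neg (by exact fun h => hm0 h.symm)]
          by_contra hc
          exact hm0 (hsupp m (MvPolynomial.mem_support_iff.mpr hc))
      have hc0 : MvPolynomial.coeff 0 r ≠ 0 := by
        intro hc
        rw [hrC, hc, map_zero] at hr0
        exact hr0 rfl
      rw [hrC]
      exact (isUnit_iff_ne_zero.mpr hc0).map MvPolynomial.C
    rcases Nat.eq_zero_or_pos a.totalDegree with hA | hA
    · exact Or.inl (hC a ha0 hA)
    · exact Or.inr (hC b hb0 (by omega))

end StmtAux

lemma eq_C_of_totalDegree_eq_zero {r : MvPolynomial (Fin 3) ℂ} (hr : r.totalDegree = 0) :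
    r = MvPolynomial.C (MvPolynomial.coeff 0 r) := by
  have hsupp : ∀ m ∈ r.support, m = 0 := by
    intro m hm
    ext x
    exact (MvPolynomial.totalDegree_eq_zero_iff _ r).mp hr m hm x
  ext m
  rcases eq_or_ne m 0 with rfl | hm0
  · simp
  · rw [MvPolynomial.coeff_C, if_neg (by exact fun h => hm0 h.symm)]
    by_contra hc
    exact hm0 (hsupp m (MvPolynomial.mem_support_iff.mpr hc))


/-- For a foliation of degree `d` on `ℙ²`, the weighted number of radial singularities
`∑ᵢ i · rᵢ(F) = ∑_{s radial} ord(s)` is at most `(d+2)(d-1)`.  Following the given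
context, we assume that the discriminant `Δ` of the dual `d`-web of degree one is a
(nonzero, homogeneous) curve of degree `(d+2)(d-1)` and that the dual line `ℓ s` of a
radial singularity `s` of order `ord s` divides `Δ` with multiplicity `ord s`; distinct
singularities give non-proportional dual lines. -/
theorem stmt_3 {d : ℕ} (hd : 1 ≤ d) {ι : Type} [Fintype ι]
    (ord : ι → ℕ)
    (Δ : MvPolynomial (Fin 3) ℂ) (hΔne : Δ ≠ 0)
    (hΔdeg : Δ.totalDegree = (d + 2) * (d - 1))
    (hΔhom : Δ.IsHomogeneous ((d + 2) * (d - 1)))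
    (ℓ : ι → MvPolynomial (Fin 3) ℂ)
    (hℓ : ∀ s, (ℓ s).IsHomogeneous 1) (hℓne : ∀ s, ℓ s ≠ 0)
    (hdvd : ∀ s, (ℓ s) ^ (ord s) ∣ Δ)
    (hdistinct : ∀ s t, s ≠ t → ¬ ∃ c : ℂ, ℓ s = C c * ℓ t) :
    ∑ s, ord s ≤ (d + 2) * (d - 1) := by
  classical
  have hdeg1 : ∀ s, (ℓ s).totalDegree = 1 := fun s => (hℓ s).totalDegree (hℓne s)
  have hprime : ∀ s, Prime (ℓ s) := fun s => prime_of_totalDegree_one (hdeg1 s)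
  have hnd : ∀ s t, s ≠ t → ¬ (ℓ s ∣ ℓ t) := by
    rintro s t hst ⟨u, hu⟩
    have hu0 : u ≠ 0 := by rintro rfl; rw [mul_zero] at hu; exact hℓne t hu
    have hu_deg : u.totalDegree = 0 := by
      have h := totalDegree_mul_eq (hℓne s) hu0
      rw [← hu, hdeg1 t, hdeg1 s] at h
      omega
    refine hdistinct t s hst.symm ⟨MvPolynomial.coeff 0 u, ?_⟩
    conv_lhs => rw [hu, eq_C_of_totalDegree_eq_zero hu_deg]
    ring
  have key : ∀ F : Finset ι, (∏ s ∈ F, ℓ s ^ ord s) ∣ Δ := by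
    intro F
    induction F using Finset.induction_on with
    | empty => simp
    | @insert a F' ha ih =>
      obtain ⟨q, hq⟩ := ih
      have hnotdvd : ¬ ℓ a ∣ ∏ s ∈ F', ℓ s ^ ord s := by
        intro hdv
        obtain ⟨t, htF, htd⟩ := (hprime a).exists_mem_finset_dvd hdv
        exact hnd a t (fun h => ha (h ▸ htF)) ((hprime a).dvd_of_dvd_pow htd)
      have h2 : (ℓ a) ^ (ord a) ∣ q :=
        (hprime a).pow_dvd_of_dvd_mul_left _ hnotdvd (hq ▸ hdvd a)
      obtain ⟨r, hr⟩ := h2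
      rw [Finset.prod_insert ha]
      exact ⟨r, by rw [hq, hr]; ring⟩
  obtain ⟨q, hq⟩ := key Finset.univ
  have hPne : (∏ s, ℓ s ^ ord s) ≠ 0 :=
    Finset.prod_ne_zero_iff.mpr fun s _ => pow_ne_zero _ (hℓne s)
  have hq0 : q ≠ 0 := by rintro rfl; rw [mul_zero] at hq; exact hΔne hq
  have hPhom : (∏ s, ℓ s ^ ord s).IsHomogeneous (∑ s, ord s) := by
    have := MvPolynomial.IsHomogeneous.prod Finset.univ (fun s => ℓ s ^ ord s)
      (fun s => 1 * ord s) (fun s _ => (hℓ s).pow (ord s))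
    simpa using this
  have hPdeg : (∏ s, ℓ s ^ ord s).totalDegree = ∑ s, ord s := hPhom.totalDegree hPne
  have hfin := totalDegree_mul_eq hPne hq0
  rw [← hq, hΔdeg, hPdeg] at hfin
  omega
end

section
/- Let W be a germ of smooth 4-web on (ℂ²,0) decomposed as four pairwise transverse foliations F_1,…,F_4 defined by 1-forms ω_1,…,ω_4 with ω_1 + ω_2 + ω_3 = 0 and ω_4 = λω_1 + μω_2 for constants λ, μ ∈ ℂ (i.e. the j-invariant of W is constant). Then there exists a unique holomorphic 1-form η with dω_i = η ∧ ω_i for all i = 1,…,4, and consequently the curvature of W equals 4 times the curvature of any of its 3-subwebs. -/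
/-- Germs of holomorphic functions at `0 ∈ ℂ²` are modelled by formal power series
in two variables (variable `0` is `x`, variable `1` is `y`). -/
noncomputable def pd9 (i : Fin 2) (f : MvPowerSeries (Fin 2) ℂ) :
    MvPowerSeries (Fin 2) ℂ :=
  fun m => ((m i : ℕ) + 1 : ℂ) * MvPowerSeries.coeff (R := ℂ) (m + Finsupp.single i 1) f

/-- A 1-form `P dx + Q dy` is the pair `(P, Q)`; its exterior differential is the
coefficient of `d(P dx + Q dy) = (∂ₓQ - ∂yP) dx ∧ dy`. -/
noncomputable def dP9 (ω : MvPowerSeries (Fin 2) ℂ × MvPowerSeries (Fin 2) ℂ) :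
    MvPowerSeries (Fin 2) ℂ :=
  pd9 0 ω.2 - pd9 1 ω.1

/-- Wedge product coefficient: `(A dx + B dy) ∧ (P dx + Q dy) = (AQ - BP) dx ∧ dy`. -/
noncomputable def wP9 (η ω : MvPowerSeries (Fin 2) ℂ × MvPowerSeries (Fin 2) ℂ) :
    MvPowerSeries (Fin 2) ℂ :=
  η.1 * ω.2 - η.2 * ω.1

lemma pd9_add (i : Fin 2) (f g : MvPowerSeries (Fin 2) ℂ) :
    pd9 i (f + g) = pd9 i f + pd9 i g := by
  funext m
  show ((m i : ℕ) + 1 : ℂ) * MvPowerSeries.coeff (R := ℂ) (m + Finsupp.single i 1) (f + g)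
    = pd9 i f m + pd9 i g m
  simp only [map_add, pd9, MvPowerSeries.coeff_apply]
  ring

lemma pd9_neg (i : Fin 2) (f : MvPowerSeries (Fin 2) ℂ) :
    pd9 i (-f) = -pd9 i f := by
  funext m
  show ((m i : ℕ) + 1 : ℂ) * MvPowerSeries.coeff (R := ℂ) (m + Finsupp.single i 1) (-f)
    = -pd9 i f m
  simp only [map_neg, pd9, MvPowerSeries.coeff_apply]
  ring

lemma pd9_C_mul (i : Fin 2) (c : ℂ) (f : MvPowerSeries (Fin 2) ℂ) :
    pd9 i (MvPowerSeries.C (σ := Fin 2) (R := ℂ) c * f) = MvPowerSeries.C (σ := Fin 2) (R := ℂ) c * pd9 i f := by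
  funext m
  show ((m i : ℕ) + 1 : ℂ) * MvPowerSeries.coeff (R := ℂ) (m + Finsupp.single i 1)
      (MvPowerSeries.C (σ := Fin 2) (R := ℂ) c * f)
    = (MvPowerSeries.C (σ := Fin 2) (R := ℂ) c * pd9 i f) m
  rw [MvPowerSeries.coeff_C_mul,
    show (MvPowerSeries.C (σ := Fin 2) (R := ℂ) c * pd9 i f) m
      = MvPowerSeries.coeff (R := ℂ) m (MvPowerSeries.C (σ := Fin 2) (R := ℂ) c * pd9 i f) from rfl,
    MvPowerSeries.coeff_C_mul]
  show _ = c * (((m i : ℕ) + 1 : ℂ) * _)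
  ring

/-- Uniqueness of a 1-form with prescribed wedges against two transverse 1-forms. -/
lemma uniq9 (p q a b : MvPowerSeries (Fin 2) ℂ × MvPowerSeries (Fin 2) ℂ)
    (hpq : MvPowerSeries.constantCoeff (σ := Fin 2) (R := ℂ) (wP9 p q) ≠ 0)
    (h1 : wP9 a p = wP9 b p) (h2 : wP9 a q = wP9 b q) : a = b := by
  have hD : wP9 p q ≠ 0 := fun h => hpq (by rw [h, map_zero])
  simp only [wP9] at h1 h2 hD
  have e1 : (a.1 - b.1) * (p.1 * q.2 - p.2 * q.1) = 0 := by
    linear_combination p.1 * h2 - q.1 * h1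
  have e2 : (a.2 - b.2) * (p.1 * q.2 - p.2 * q.1) = 0 := by
    linear_combination p.2 * h2 - q.2 * h1
  have f1 : a.1 = b.1 := by
    rcases mul_eq_zero.mp e1 with h | h
    · linear_combination h
    · exact absurd h hD
  have f2 : a.2 = b.2 := by
    rcases mul_eq_zero.mp e2 with h | h
    · linear_combination h
    · exact absurd h hD
  exact Prod.ext f1 f2

/-- A germ of smooth 4-web on `(ℂ²,0)` given by pairwise transverse foliations defined
by 1-forms `ω₀,…,ω₃` with `ω₀ + ω₁ + ω₂ = 0` and `ω₃ = λω₀ + μω₁` (constant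
`j`-invariant).  Then there is a unique holomorphic 1-form `η` with `dωᵢ = η ∧ ωᵢ` for
all `i`; any 1-form `η_T` solving these equations for a 3-element subset `T` (i.e. a
connection form of the corresponding 3-subweb) has `dη_T = dη`, so the curvature of
the 4-web — the sum of the curvatures of its four 3-subwebs — equals `4 dη`, four
times the curvature of any of its 3-subwebs. -/
theorem stmt_9 (ω : Fin 4 → MvPowerSeries (Fin 2) ℂ × MvPowerSeries (Fin 2) ℂ)
    (lam mu : ℂ)
    (htrans : ∀ i j, i ≠ j →
      MvPowerSeries.constantCoeff (σ := Fin 2) (R := ℂ) (wP9 (ω i) (ω j)) ≠ 0)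
    (hsum1 : (ω 0).1 + (ω 1).1 + (ω 2).1 = 0)
    (hsum2 : (ω 0).2 + (ω 1).2 + (ω 2).2 = 0)
    (h41 : (ω 3).1 = MvPowerSeries.C (σ := Fin 2) (R := ℂ) lam * (ω 0).1
      + MvPowerSeries.C (σ := Fin 2) (R := ℂ) mu * (ω 1).1)
    (h42 : (ω 3).2 = MvPowerSeries.C (σ := Fin 2) (R := ℂ) lam * (ω 0).2
      + MvPowerSeries.C (σ := Fin 2) (R := ℂ) mu * (ω 1).2) :
    ∃ η : MvPowerSeries (Fin 2) ℂ × MvPowerSeries (Fin 2) ℂ,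
      (∀ i, dP9 (ω i) = wP9 η (ω i)) ∧
      (∀ η', (∀ i, dP9 (ω i) = wP9 η' (ω i)) → η' = η) ∧
      (∀ T : Finset (Fin 4), T.card = 3 →
        ∀ ηT, (∀ i ∈ T, dP9 (ω i) = wP9 ηT (ω i)) → dP9 ηT = dP9 η) ∧
      (∀ κ : Finset (Fin 4) → MvPowerSeries (Fin 2) ℂ × MvPowerSeries (Fin 2) ℂ,
        (∀ T ∈ Finset.univ.filter (fun T : Finset (Fin 4) => T.card = 3),
          ∀ i ∈ T, dP9 (ω i) = wP9 (κ T) (ω i)) →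
        ∑ T ∈ Finset.univ.filter (fun T : Finset (Fin 4) => T.card = 3), dP9 (κ T)
          = 4 * dP9 η) := by
  classical
  set D : MvPowerSeries (Fin 2) ℂ := wP9 (ω 0) (ω 1) with hDdef
  have hD0 : MvPowerSeries.constantCoeff (σ := Fin 2) (R := ℂ) D ≠ 0 := htrans 0 1 (by decide)
  have hDinv : D * D⁻¹ = 1 := MvPowerSeries.mul_inv_cancel D hD0
  set A := dP9 (ω 0) with hA
  set B := dP9 (ω 1) with hB
  set η : MvPowerSeries (Fin 2) ℂ × MvPowerSeries (Fin 2) ℂ :=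
    ((B * (ω 0).1 - A * (ω 1).1) * D⁻¹, (B * (ω 0).2 - A * (ω 1).2) * D⁻¹) with hη
  have h0 : dP9 (ω 0) = wP9 η (ω 0) := by
    have : wP9 η (ω 0) = A * (D * D⁻¹) := by
      simp only [wP9, hη, hDdef]; ring
    rw [this, hDinv, mul_one, hA]
  have h1 : dP9 (ω 1) = wP9 η (ω 1) := by
    have : wP9 η (ω 1) = B * (D * D⁻¹) := by
      simp only [wP9, hη, hDdef]; ring
    rw [this, hDinv, mul_one, hB]
  have h21 : (ω 2).1 = -(ω 0).1 + -(ω 1).1 := by linear_combination hsum1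
  have h22 : (ω 2).2 = -(ω 0).2 + -(ω 1).2 := by linear_combination hsum2
  have h2 : dP9 (ω 2) = wP9 η (ω 2) := by
    have l : dP9 (ω 2) = -dP9 (ω 0) - dP9 (ω 1) := by
      simp only [dP9, h21, h22, pd9_add, pd9_neg]; ring
    have r : wP9 η (ω 2) = -wP9 η (ω 0) - wP9 η (ω 1) := by
      simp only [wP9, h21, h22]; ring
    rw [l, r, h0, h1]
  have h3 : dP9 (ω 3) = wP9 η (ω 3) := by
    have l : dP9 (ω 3) = MvPowerSeries.C (σ := Fin 2) (R := ℂ) lam * dP9 (ω 0)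
        + MvPowerSeries.C (σ := Fin 2) (R := ℂ) mu * dP9 (ω 1) := by
      simp only [dP9, h41, h42, pd9_add, pd9_C_mul]; ring
    have r : wP9 η (ω 3) = MvPowerSeries.C (σ := Fin 2) (R := ℂ) lam * wP9 η (ω 0)
        + MvPowerSeries.C (σ := Fin 2) (R := ℂ) mu * wP9 η (ω 1) := by
      simp only [wP9, h41, h42]; ring
    rw [l, r, h0, h1]
  have hAll : ∀ i, dP9 (ω i) = wP9 η (ω i) := by
    intro i; fin_cases i <;> assumption
  have hsub : ∀ T : Finset (Fin 4), T.card = 3 →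
      ∀ ηT, (∀ i ∈ T, dP9 (ω i) = wP9 ηT (ω i)) → dP9 ηT = dP9 η := by
    intro T hT ηT hηT
    obtain ⟨i, hi, j, hj, hij⟩ : ∃ i ∈ T, ∃ j ∈ T, i ≠ j :=
      Finset.one_lt_card.mp (by omega)
    have : ηT = η := uniq9 (ω i) (ω j) ηT η (htrans i j hij)
      ((hηT i hi).symm.trans (hAll i)) ((hηT j hj).symm.trans (hAll j))
    rw [this]
  refine ⟨η, hAll, ?_, hsub, ?_⟩
  · intro η' h'
    exact uniq9 (ω 0) (ω 1) η' η (htrans 0 1 (by decide))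
      ((h' 0).symm.trans (hAll 0)) ((h' 1).symm.trans (hAll 1))
  · intro κ hκ
    have key : ∀ T ∈ Finset.univ.filter (fun T : Finset (Fin 4) => T.card = 3),
        dP9 (κ T) = dP9 η := fun T hT =>
      hsub T (Finset.mem_filter.mp hT).2 (κ T) (hκ T hT)
    rw [Finset.sum_congr rfl key, Finset.sum_const,
      show (Finset.univ.filter (fun T : Finset (Fin 4) => T.card = 3)).card = 4 by decide,
      nsmul_eq_mul]
    norm_num
end

section
/- Let p, q be coprime integers with q > 0 and p ∉ {0, q}. Then the curve 𝔽_{p/q} defined by ∏_{n=1}^{q}∏_{m=1}^{q}(x^{p/q} + e^{2πim/q} y^{p/q} + e^{2πin/q} z^{p/q}) = 0, i.e. the polynomial obtained by expanding this product (which is a genuine polynomial in x, y, z), is irreducible. -/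
open Finset

namespace TS

noncomputable section

abbrev R2 : Type := MvPolynomial (Fin 2) ℂ
abbrev R3 : Type := MvPolynomial (Fin 3) ℂ

open MvPolynomial

/-- Units of multivariate polynomial rings over `ℂ` are nonzero constants. -/
lemma isUnit_eq_C : ∀ {n : ℕ} {u : MvPolynomial (Fin n) ℂ}, IsUnit u →
    ∃ c : ℂ, c ≠ 0 ∧ u = C c := by
  intro n
  induction n with
  | zero =>
    intro u h
    obtain ⟨c, rfl⟩ := MvPolynomial.C_surjective (Fin 0) u
    refine ⟨c, ?_, rfl⟩
    rintro rfl
    rw [map_zero] at h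
    exact not_isUnit_zero h
  | succ n ih =>
    intro u h
    have h2 : IsUnit ((MvPolynomial.finSuccEquiv ℂ n) u) := h.map (MvPolynomial.finSuccEquiv ℂ n)
    obtain ⟨r, hr, hCr⟩ := Polynomial.isUnit_iff.mp h2
    obtain ⟨c, hc, rfl⟩ := ih hr
    refine ⟨c, hc, ?_⟩
    have h3 := congrArg (MvPolynomial.finSuccEquiv ℂ n).symm hCr
    rw [AlgEquiv.symm_apply_apply] at h3
    rw [← h3]
    have h4 := RingHom.congr_fun (MvPolynomial.finSuccEquiv_comp_C_eq_C (R := ℂ) n) c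
    simpa using h4

lemma finSuccEquiv_C (n : ℕ) (c : ℂ) :
    (MvPolynomial.finSuccEquiv ℂ n) (C c) = Polynomial.C (C c) := by
  rw [MvPolynomial.finSuccEquiv_apply]
  simp

lemma irr_lin (c : ℂ) : Irreducible (X 0 - C c * X 1 : R2) := by
  apply (MulEquiv.irreducible_iff (MvPolynomial.finSuccEquiv ℂ 1)).mp
  have h1 : (1 : Fin 2) = Fin.succ 0 := rfl
  rw [map_sub, map_mul, h1, MvPolynomial.finSuccEquiv_X_succ, MvPolynomial.finSuccEquiv_X_zero]
  rw [finSuccEquiv_C, ← Polynomial.C_mul]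
  exact Polynomial.irreducible_X_sub_C _

lemma prime_lin (c : ℂ) : Prime (X 0 - C c * X 1 : R2) :=
  UniqueFactorizationMonoid.irreducible_iff_prime.mp (irr_lin c)

lemma irr_X0 : Irreducible (X 0 : R2) := by
  apply (MulEquiv.irreducible_iff (MvPolynomial.finSuccEquiv ℂ 1)).mp
  rw [MvPolynomial.finSuccEquiv_X_zero]
  exact Polynomial.irreducible_X

lemma irr_X1 : Irreducible (X 1 : R2) := by
  have h := (MulEquiv.irreducible_iff (MvPolynomial.renameEquiv ℂ (Equiv.swap (0 : Fin 2) 1))).mpr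
    irr_X0
  simpa using h

lemma not_dvd_of_eval_ne {π f : R2} (v : Fin 2 → ℂ) (hπ : eval v π = 0)
    (hf : eval v f ≠ 0) : ¬ π ∣ f := by
  rintro ⟨t, rfl⟩
  rw [map_mul, hπ, zero_mul] at hf
  exact hf rfl

/-- The linear form `X 0 - c·X 1` divides `a X0^P + b X1^P` exactly once, when `a c^P = -b`. -/
lemma dvd_once {P : ℕ} (hP : 0 < P) {a b c : ℂ} (ha : a ≠ 0) (hb : b ≠ 0)
    (hc : a * c ^ P = -b) :
    (X 0 - C c * X 1 : R2) ∣ (C a * X 0 ^ P + C b * X 1 ^ P : R2) ∧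
      ¬ (X 0 - C c * X 1) * (X 0 - C c * X 1) ∣ (C a * X 0 ^ P + C b * X 1 ^ P : R2) := by
  have hc0 : c ≠ 0 := by
    rintro rfl
    rw [zero_pow hP.ne', mul_zero] at hc
    exact hb (by simpa using hc.symm)
  have hb' : (C b : R2) = - C (a * c ^ P) := by rw [hc, map_neg, neg_neg]
  have hB : (C a * X 0 ^ P + C b * X 1 ^ P : R2) = C a * (X 0 ^ P - (C c * X 1) ^ P) := by
    rw [hb']
    rw [mul_sub, mul_pow, ← C_pow, ← mul_assoc, ← C_mul]
    ring
  constructor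
  · rw [hB]
    exact Dvd.dvd.mul_left (sub_dvd_pow_sub_pow _ _ P) _
  · rintro ⟨t, ht⟩
    -- apply pderiv 0
    have hdvd : (X 0 - C c * X 1 : R2) ∣ MvPolynomial.pderiv 0 (C a * X 0 ^ P + C b * X 1 ^ P) := by
      rw [ht]
      rw [mul_assoc, MvPolynomial.pderiv_mul]
      exact dvd_add (Dvd.dvd.mul_left (dvd_mul_right _ _) _) (dvd_mul_right _ _)
    have hder : MvPolynomial.pderiv 0 (C a * X 0 ^ P + C b * X 1 ^ P : R2)
        = C a * C (P : ℂ) * X 0 ^ (P - 1) := by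
      have h0 : MvPolynomial.pderiv (0 : Fin 2) (X 1 : R2) = 0 := by
        rw [MvPolynomial.pderiv_X]
        simp
      have h1 : MvPolynomial.pderiv (0 : Fin 2) (X 0 : R2) = 1 := by
        rw [MvPolynomial.pderiv_X]
        simp
      rw [map_add, MvPolynomial.pderiv_C_mul, MvPolynomial.pderiv_C_mul,
        MvPolynomial.pderiv_pow, MvPolynomial.pderiv_pow, h0, h1]
      rw [← map_natCast (C : ℂ →+* R2) P]
      ring
    rw [hder] at hdvd
    have hprime := prime_lin c
    have hCu : IsUnit (C a * C (P : ℂ) : R2) := by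
      have hP' : (P : ℂ) ≠ 0 := Nat.cast_ne_zero.mpr hP.ne'
      rw [← map_mul]
      exact (mul_ne_zero ha hP').isUnit.map (C : ℂ →+* R2)
    rcases hprime.2.2 _ _ hdvd with h | h
    · exact hprime.not_unit (isUnit_of_dvd_unit h hCu)
    · have hX : (X 0 - C c * X 1 : R2) ∣ X 0 := by
        rcases Nat.eq_zero_or_pos (P - 1) with h0 | h0
        · rw [h0, pow_zero] at h
          exact absurd (isUnit_of_dvd_one h) hprime.not_unit
        · exact hprime.dvd_of_dvd_pow h
      refine not_dvd_of_eval_ne (π := (X 0 - C c * X 1 : R2)) (f := (X 0 : R2)) ![c, 1] ?_ ?_ hX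
      · simp
      · simpa using hc0

lemma deg_facts {A B : R2} (P : ℕ) (hP : 0 < P) (hA : A ≠ 0) :
    (Polynomial.C A * Polynomial.X ^ P + Polynomial.C B).degree = (P : WithBot ℕ) ∧
    (Polynomial.C A * Polynomial.X ^ P + Polynomial.C B).natDegree = P ∧
    (Polynomial.C A * Polynomial.X ^ P + Polynomial.C B).coeff P = A ∧
    (Polynomial.C A * Polynomial.X ^ P + Polynomial.C B).coeff 0 = B := by
  have h1 : (Polynomial.C A * Polynomial.X ^ P : Polynomial R2).degree = P :=
    Polynomial.degree_C_mul_X_pow P hA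
  have h2 : (Polynomial.C B : Polynomial R2).degree < (Polynomial.C A * Polynomial.X ^ P :
      Polynomial R2).degree := by
    rw [h1]
    exact lt_of_le_of_lt Polynomial.degree_C_le (by exact_mod_cast hP)
  have hdeg : (Polynomial.C A * Polynomial.X ^ P + Polynomial.C B).degree = (P : WithBot ℕ) := by
    rw [Polynomial.degree_add_eq_left_of_degree_lt h2, h1]
  refine ⟨hdeg, Polynomial.natDegree_eq_of_degree_eq_some hdeg, ?_, ?_⟩
  · rw [Polynomial.coeff_add, Polynomial.coeff_C_mul, Polynomial.coeff_X_pow, if_pos rfl,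
      Polynomial.coeff_C, if_neg hP.ne', mul_one, add_zero]
  · rw [Polynomial.coeff_add, Polynomial.coeff_C_mul, Polynomial.coeff_X_pow,
      if_neg (Ne.symm hP.ne'), Polynomial.coeff_C, if_pos rfl, mul_zero, zero_add]

/-- Eisenstein's criterion for `A·Xᴾ + B` at a prime `π` dividing `B` exactly once. -/
lemma eis {A B : R2} {P : ℕ} (hP : 0 < P) (hA : A ≠ 0) {π : R2} (hπ : Prime π)
    (hpB : π ∣ B) (hpB2 : ¬ π * π ∣ B) (hpA : ¬ π ∣ A)
    (hrel : ∀ r : R2, r ∣ A → r ∣ B → IsUnit r) :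
    Irreducible (Polynomial.C A * Polynomial.X ^ P + Polynomial.C B) := by
  obtain ⟨hdeg, hnd, hcP, hc0⟩ := deg_facts (B := B) P hP hA
  apply Polynomial.irreducible_of_eisenstein_criterion
      ((Ideal.span_singleton_prime hπ.ne_zero).mpr hπ)
  · rw [Polynomial.leadingCoeff, hnd, hcP, Ideal.mem_span_singleton]
    exact hpA
  · intro n hn
    rw [hdeg] at hn
    have hnP : n < P := by exact_mod_cast hn
    rw [Polynomial.coeff_add, Polynomial.coeff_C_mul, Polynomial.coeff_X_pow,
      if_neg hnP.ne, mul_zero, zero_add, Polynomial.coeff_C]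
    split_ifs
    · rwa [Ideal.mem_span_singleton]
    · exact Ideal.zero_mem _
  · rw [hdeg]
    exact_mod_cast hP
  · rw [hc0, Ideal.span_singleton_pow, Ideal.mem_span_singleton, pow_two]
    exact hpB2
  · intro r hr
    have hcoeff := (Polynomial.C_dvd_iff_dvd_coeff r _).mp hr
    have h1 := hcoeff P
    have h2 := hcoeff 0
    rw [hcP] at h1
    rw [hc0] at h2
    exact hrel r h1 h2

/-- Reversal: irreducibility of `B·Xᴾ + A` gives irreducibility of `A·Xᴾ + B`. -/
lemma rev_irr {A B : R2} {P : ℕ} (hP : 0 < P) (hA : A ≠ 0) (hB : B ≠ 0)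
    (h : Irreducible (Polynomial.C B * Polynomial.X ^ P + Polynomial.C A)) :
    Irreducible (Polynomial.C A * Polynomial.X ^ P + Polynomial.C B) := by
  obtain ⟨hdeg, hnd, hcP, hc0⟩ := deg_facts (B := B) P hP hA
  set f : Polynomial R2 := Polynomial.C A * Polynomial.X ^ P + Polynomial.C B with hf
  have hrev : f.reverse = Polynomial.C B * Polynomial.X ^ P + Polynomial.C A := by
    have hsplit : f = Polynomial.C A * Polynomial.X ^ P + Polynomial.C B * Polynomial.X ^ 0 := by
      rw [pow_zero, mul_one]
    rw [Polynomial.reverse, hnd, hsplit, Polynomial.reflect_add,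
      Polynomial.reflect_C_mul_X_pow, Polynomial.reflect_C_mul_X_pow,
      Polynomial.revAt_le le_rfl, Polynomial.revAt_le (Nat.zero_le P), Nat.sub_self,
      Nat.sub_zero, pow_zero, mul_one, add_comm]
  have key : ∀ t : Polynomial R2, t ∣ f → IsUnit t.reverse → IsUnit t := by
    intro t ht hut
    have htX : t.coeff 0 ≠ 0 := by
      intro h0
      have hXf : (Polynomial.X : Polynomial R2) ∣ f :=
        dvd_trans (Polynomial.X_dvd_iff.mpr h0) ht
      rw [Polynomial.X_dvd_iff, hc0] at hXf
      exact hB hXf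
    have htd : t.natDegree = 0 := by
      have h1 := Polynomial.natDegree_eq_zero_of_isUnit hut
      rw [Polynomial.reverse_natDegree] at h1
      have h2 : t.natTrailingDegree = 0 :=
        Polynomial.natTrailingDegree_eq_zero.mpr (Or.inr htX)
      omega
    obtain ⟨c, hc⟩ := Polynomial.natDegree_eq_zero.mp htd
    have hrevC : (Polynomial.C c : Polynomial R2).reverse = Polynomial.C c := by
      simp [Polynomial.reverse]
    rw [← hc] at hut ⊢
    rw [hrevC] at hut
    exact hut
  constructor
  · intro hu
    have h1 := Polynomial.natDegree_eq_zero_of_isUnit hu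
    rw [hnd] at h1
    omega
  · intro g h' heq
    have hrevmul : f.reverse = g.reverse * h'.reverse := by
      have h3 := congrArg Polynomial.reverse heq
      rwa [Polynomial.reverse_mul_of_domain] at h3
    rcases h.isUnit_or_isUnit (hrev ▸ hrevmul) with hg | hh
    · exact Or.inl (key g ⟨h', heq⟩ hg)
    · exact Or.inr (key h' ⟨g, by rw [heq, mul_comm]⟩ hh)

/-- Factor for positive exponent: `X₀ᴾ + a X₁ᴾ + b X₂ᴾ`. -/
def Hpos (P : ℕ) (a b : ℂ) : R3 := X 0 ^ P + C a * X 1 ^ P + C b * X 2 ^ P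

/-- Factor for negative exponent: `(X₁X₂)ᴾ + a (X₀X₂)ᴾ + b (X₀X₁)ᴾ`. -/
def Hneg (P : ℕ) (a b : ℂ) : R3 :=
  (X 1 * X 2) ^ P + C a * (X 0 * X 2) ^ P + C b * (X 0 * X 1) ^ P

lemma e3_X1 : (MvPolynomial.finSuccEquiv ℂ 2) (X 1 : R3) = Polynomial.C (X 0) := by
  have h1 : (1 : Fin 3) = Fin.succ 0 := rfl
  rw [h1, MvPolynomial.finSuccEquiv_X_succ]

lemma e3_X2 : (MvPolynomial.finSuccEquiv ℂ 2) (X 2 : R3) = Polynomial.C (X 1) := by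
  have h1 : (2 : Fin 3) = Fin.succ 1 := rfl
  rw [h1, MvPolynomial.finSuccEquiv_X_succ]

lemma e3_Hpos (P : ℕ) (a b : ℂ) :
    (MvPolynomial.finSuccEquiv ℂ 2) (Hpos P a b)
      = Polynomial.C (1 : R2) * Polynomial.X ^ P
        + Polynomial.C (C a * X 0 ^ P + C b * X 1 ^ P) := by
  rw [Hpos]
  simp only [map_add, map_mul, map_pow, MvPolynomial.finSuccEquiv_X_zero, e3_X1, e3_X2,
    finSuccEquiv_C, map_one]
  ring

lemma e3_Hneg (P : ℕ) (a b : ℂ) :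
    (MvPolynomial.finSuccEquiv ℂ 2) (Hneg P a b)
      = Polynomial.C (C b * X 0 ^ P + C a * X 1 ^ P) * Polynomial.X ^ P
        + Polynomial.C ((X 0 * X 1) ^ P) := by
  rw [Hneg]
  simp only [map_add, map_mul, map_pow, MvPolynomial.finSuccEquiv_X_zero, e3_X1, e3_X2,
    finSuccEquiv_C]
  ring

lemma irr_Hpos {P : ℕ} (hP : 0 < P) {a b : ℂ} (ha : a ≠ 0) (hb : b ≠ 0) :
    Irreducible (Hpos P a b) := by
  apply (MulEquiv.irreducible_iff (MvPolynomial.finSuccEquiv ℂ 2)).mp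
  rw [e3_Hpos]
  obtain ⟨c, hc⟩ := IsAlgClosed.exists_pow_nat_eq (-b / a) hP
  have hc' : a * c ^ P = -b := by
    rw [hc]
    field_simp
  obtain ⟨hdvd, hndvd⟩ := dvd_once hP ha hb hc'
  refine eis hP one_ne_zero (prime_lin c) hdvd hndvd ?_ ?_
  · intro hdvd1
    exact (prime_lin c).not_unit (isUnit_of_dvd_one hdvd1)
  · intro r hr _
    exact isUnit_of_dvd_one hr

lemma irr_Hneg {P : ℕ} (hP : 0 < P) {a b : ℂ} (ha : a ≠ 0) (hb : b ≠ 0) :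
    Irreducible (Hneg P a b) := by
  apply (MulEquiv.irreducible_iff (MvPolynomial.finSuccEquiv ℂ 2)).mp
  rw [e3_Hneg]
  -- the "A" coefficient
  set A : R2 := C b * X 0 ^ P + C a * X 1 ^ P with hAdef
  have hA0 : A ≠ 0 := by
    intro h0
    have := congrArg (eval ![(0 : ℂ), 1]) h0
    rw [hAdef] at this
    simp [zero_pow hP.ne'] at this
    exact ha this
  have hB0 : ((X 0 * X 1 : R2) ^ P) ≠ 0 := pow_ne_zero _ (mul_ne_zero (X_ne_zero 0) (X_ne_zero 1))
  apply rev_irr hP hA0 hB0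
  obtain ⟨c, hc⟩ := IsAlgClosed.exists_pow_nat_eq (-a / b) hP
  have hc' : b * c ^ P = -a := by
    rw [hc]
    field_simp
  have hc0 : c ≠ 0 := by
    rintro rfl
    rw [zero_pow hP.ne', mul_zero] at hc'
    exact ha (by simpa using hc'.symm)
  obtain ⟨hdvd, hndvd⟩ := dvd_once hP hb ha hc'
  refine eis hP hB0 (prime_lin c) hdvd hndvd ?_ ?_
  · apply not_dvd_of_eval_ne ![c, 1]
    · simp
    · simp [hc0, pow_ne_zero]
  · -- r divides (X0·X1)^P and A ⇒ unit
    intro r hr1 hr2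
    by_contra hun
    have hr0 : r ≠ 0 := by
      rintro rfl
      exact hB0 (zero_dvd_iff.mp hr1)
    obtain ⟨ρ, hρirr, hρdvd⟩ := WfDvdMonoid.exists_irreducible_factor hun hr0
    have hρprime : Prime ρ := UniqueFactorizationMonoid.irreducible_iff_prime.mp hρirr
    have hρA : ρ ∣ A := hρdvd.trans hr2
    have hρB : ρ ∣ (X 0 * X 1 : R2) ^ P := hρdvd.trans hr1
    rw [mul_pow] at hρB
    have hXA : ∀ i : Fin 2, Irreducible (X i : R2) → ρ ∣ (X i : R2) → (X i : R2) ∣ A := by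
      intro i hXirr hd
      exact (hρirr.associated_of_dvd hXirr hd).symm.dvd.trans hρA
    rcases hρprime.2.2 _ _ hρB with h | h
    · have hd : ρ ∣ (X 0 : R2) := hρprime.dvd_of_dvd_pow h
      have hXdvd : (X 0 : R2) ∣ A := hXA 0 irr_X0 hd
      refine not_dvd_of_eval_ne ![(0 : ℂ), 1] (by simp) ?_ hXdvd
      simp [hAdef, zero_pow hP.ne']
      exact ha
    · have hd : ρ ∣ (X 1 : R2) := hρprime.dvd_of_dvd_pow h
      have hXdvd : (X 1 : R2) ∣ A := hXA 1 irr_X1 hd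
      refine not_dvd_of_eval_ne ![(1 : ℂ), 0] (by simp) ?_ hXdvd
      simp [hAdef, zero_pow hP.ne']
      exact hb

lemma assoc_Hpos {P : ℕ} (hP : 0 < P) {a b a' b' : ℂ}
    (h : Associated (Hpos P a b) (Hpos P a' b')) : a = a' ∧ b = b' := by
  obtain ⟨u, hu⟩ := h
  obtain ⟨k, hk0, hk⟩ := isUnit_eq_C u.isUnit
  rw [hk] at hu
  have h1 := congrArg (eval ![(1 : ℂ), 0, 0]) hu
  have h2 := congrArg (eval ![(0 : ℂ), 1, 0]) hu
  have h3 := congrArg (eval ![(0 : ℂ), 0, 1]) hu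
  simp [Hpos, zero_pow hP.ne'] at h1 h2 h3
  rw [h1, mul_one] at h2 h3
  exact ⟨h2, h3⟩

lemma assoc_Hneg {P : ℕ} (hP : 0 < P) {a b a' b' : ℂ}
    (h : Associated (Hneg P a b) (Hneg P a' b')) : a = a' ∧ b = b' := by
  obtain ⟨u, hu⟩ := h
  obtain ⟨k, hk0, hk⟩ := isUnit_eq_C u.isUnit
  rw [hk] at hu
  have h1 := congrArg (eval ![(0 : ℂ), 1, 1]) hu
  have h2 := congrArg (eval ![(1 : ℂ), 0, 1]) hu
  have h3 := congrArg (eval ![(1 : ℂ), 1, 0]) hu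
  simp [Hneg, zero_pow hP.ne'] at h1 h2 h3
  rw [h1, mul_one] at h2 h3
  exact ⟨h2, h3⟩

/-- Substitution `Xᵢ ↦ Xᵢᵏ`. -/
def φ (k : ℕ) : R3 →ₐ[ℂ] R3 := MvPolynomial.aeval (fun i => X i ^ k)

/-- Rescaling `Xᵢ ↦ wᵢ·Xᵢ`. -/
def τ (w : Fin 3 → ℂ) : R3 →ₐ[ℂ] R3 := MvPolynomial.aeval (fun i => C (w i) * X i)

lemma φ_monomial (k : ℕ) (u : Fin 3 →₀ ℕ) (c : ℂ) :
    φ k (monomial u c) = monomial (k • u) c := by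
  rw [φ, aeval_monomial, monomial_eq]
  have hsm : k • u = u.mapRange (k * ·) (mul_zero k) := by
    ext i
    simp [Finsupp.mapRange_apply]
  rw [hsm, Finsupp.prod_mapRange_index (fun i => pow_zero _)]
  simp only [pow_mul]
  rw [MvPolynomial.algebraMap_eq]

lemma φ_coeff {k : ℕ} (hk : k ≠ 0) (f : R3) (d : Fin 3 →₀ ℕ) :
    coeff (k • d) (φ k f) = coeff d f := by
  classical
  induction f using MvPolynomial.induction_on' with
  | monomial u a =>
    rw [φ_monomial, coeff_monomial, coeff_monomial]
    by_cases h : u = d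
    · rw [if_pos (by rw [h]), if_pos h]
    · rw [if_neg ?_, if_neg h]
      intro hsm
      apply h
      ext i
      have := congrArg (fun g : Fin 3 →₀ ℕ => g i) hsm
      simp only [Finsupp.smul_apply, smul_eq_mul] at this
      exact Nat.eq_of_mul_eq_mul_left (Nat.pos_of_ne_zero hk) this
  | add p q hp hq =>
    rw [map_add, coeff_add, coeff_add, hp, hq]

lemma φ_injective {k : ℕ} (hk : k ≠ 0) : Function.Injective (φ k) := by
  intro f g h
  ext d
  rw [← φ_coeff hk f d, ← φ_coeff hk g d, h]

lemma φ_C (k : ℕ) (c : ℂ) : φ k (C c) = C c := by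
  rw [φ, aeval_C, MvPolynomial.algebraMap_eq]

lemma φ_isUnit {k : ℕ} (hk : k ≠ 0) {f : R3} (h : IsUnit (φ k f)) : IsUnit f := by
  obtain ⟨c, hc0, hc⟩ := isUnit_eq_C h
  have h2 : φ k f = φ k (C c) := by rw [hc, φ_C]
  rw [φ_injective hk h2]
  exact hc0.isUnit.map (C : ℂ →+* R3)

lemma τ_φ {k : ℕ} {w : Fin 3 → ℂ} (hw : ∀ i, w i ^ k = 1) (f : R3) :
    τ w (φ k f) = φ k f := by
  have hcomp : (τ w).comp (φ k) = φ k := by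
    apply MvPolynomial.algHom_ext
    intro i
    rw [AlgHom.comp_apply, φ, τ, aeval_X, map_pow, aeval_X, mul_pow, ← C_pow, hw i, map_one,
      one_mul]
  exact DFunLike.congr_fun hcomp f

lemma root_exists {P Q : ℕ} (hQ : 0 < Q) (hcop : Nat.Coprime P Q) {g : ℂ} (hg : g ^ Q = 1) :
    ∃ w : ℂ, w ^ Q = 1 ∧ w ^ P = g := by
  rcases eq_or_lt_of_le (Nat.succ_le_of_lt hQ) with h1 | h1
  · refine ⟨1, one_pow _, ?_⟩
    rw [one_pow, ← hg, ← h1, pow_one]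
  · obtain ⟨m, -, hm⟩ := Nat.exists_mul_mod_eq_one_of_coprime hcop h1
    refine ⟨g ^ m, ?_, ?_⟩
    · rw [← pow_mul, Nat.mul_comm m Q, pow_mul, hg, one_pow]
    · have hm' : m * P % Q = 1 := by rwa [Nat.mul_comm m P]
      rw [← pow_mul, ← Nat.div_add_mod (m * P) Q, pow_add, pow_mul, hg, one_pow, one_mul, hm',
        pow_one]

/-- Core argument: if `φ Q F` is a product of pairwise non-associated irreducibles
which are permuted transitively (up to units) by automorphisms fixing the image of `φ Q`,
then `F` is irreducible. -/
lemma main_core {Q : ℕ} (hQ : 0 < Q) {e : ℕ → ℂ} (he0 : ∀ m, e m ≠ 0)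
    (heQ : ∀ m, e m ^ Q = 1)
    (hinjE : ∀ m ∈ Icc 1 Q, ∀ m' ∈ Icc 1 Q, e m = e m' → m = m')
    {H : ℂ → ℂ → R3}
    (hirr : ∀ {a b : ℂ}, a ≠ 0 → b ≠ 0 → Irreducible (H a b))
    (hassoc : ∀ {a b a' b' : ℂ}, Associated (H a b) (H a' b') → a = a' ∧ b = b')
    (htrans : ∀ {a b a' b' : ℂ}, a ≠ 0 → b ≠ 0 → a' ≠ 0 → b' ≠ 0 →
      a ^ Q = 1 → b ^ Q = 1 → a' ^ Q = 1 → b' ^ Q = 1 →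
      ∃ w : Fin 3 → ℂ, (∀ i, w i ^ Q = 1) ∧ ∃ c : ℂ, c ≠ 0 ∧
        τ w (H a b) = C c * H a' b')
    {F : R3} (hφF : φ Q F = ∏ x ∈ Icc 1 Q ×ˢ Icc 1 Q, H (e x.1) (e x.2)) :
    Irreducible F := by
  classical
  set s : Finset (ℕ × ℕ) := Icc 1 Q ×ˢ Icc 1 Q with hs
  have hirrx : ∀ x : ℕ × ℕ, Irreducible (H (e x.1) (e x.2)) := fun x =>
    hirr (he0 x.1) (he0 x.2)
  have hG0 : (∏ x ∈ s, H (e x.1) (e x.2)) ≠ 0 :=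
    Finset.prod_ne_zero_iff.mpr fun x _ => (hirrx x).ne_zero
  have hQQ : (Q, Q) ∈ s := by
    rw [hs, Finset.mem_product]
    constructor <;> (rw [Finset.mem_Icc]; exact ⟨hQ, le_rfl⟩)
  constructor
  · intro hu
    have h1 : IsUnit (φ Q F) := hu.map (φ Q)
    rw [hφF] at h1
    exact (hirrx (Q, Q)).not_isUnit
      (isUnit_of_dvd_unit (Finset.dvd_prod_of_mem (fun x : ℕ × ℕ => H (e x.1) (e x.2)) hQQ) h1)
  · intro u v huv
    by_contra hcon
    push_neg at hcon
    obtain ⟨hu, hv⟩ := hcon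
    have hmul : φ Q u * φ Q v = ∏ x ∈ s, H (e x.1) (e x.2) := by
      rw [← map_mul, ← huv, hφF]
    have hu0 : φ Q u ≠ 0 := fun h0 => hG0 (by rw [← hmul, h0, zero_mul])
    have hv0 : φ Q v ≠ 0 := fun h0 => hG0 (by rw [← hmul, h0, mul_zero])
    have hunotunit : ¬ IsUnit (φ Q u) := fun h => hu (φ_isUnit hQ.ne' h)
    have hvnotunit : ¬ IsUnit (φ Q v) := fun h => hv (φ_isUnit hQ.ne' h)
    -- find irreducible factors of φ Q u and φ Q v among the H's
    have hfind : ∀ t : R3, t ≠ 0 → ¬ IsUnit t → t ∣ (∏ x ∈ s, H (e x.1) (e x.2)) →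
        ∃ x ∈ s, H (e x.1) (e x.2) ∣ t := by
      intro t ht0 htu htdvd
      obtain ⟨π, hπirr, hπdvd⟩ := WfDvdMonoid.exists_irreducible_factor htu ht0
      have hπprime : Prime π := UniqueFactorizationMonoid.irreducible_iff_prime.mp hπirr
      obtain ⟨x, hxs, hx⟩ := hπprime.exists_mem_finset_dvd (hπdvd.trans htdvd)
      exact ⟨x, hxs, (hπirr.associated_of_dvd (hirrx x) hx).symm.dvd.trans hπdvd⟩
    obtain ⟨x₁, hx₁s, hx₁⟩ := hfind _ hu0 hunotunit ⟨φ Q v, hmul.symm⟩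
    obtain ⟨x₂, hx₂s, hx₂⟩ := hfind _ hv0 hvnotunit ⟨φ Q u, by rw [← hmul, mul_comm]⟩
    -- transport the factor of u to the factor of v
    obtain ⟨w, hw, c, hc0, hτ⟩ := htrans (he0 x₁.1) (he0 x₁.2) (he0 x₂.1) (he0 x₂.2)
      (heQ x₁.1) (heQ x₁.2) (heQ x₂.1) (heQ x₂.2)
    have hdvd2 : H (e x₂.1) (e x₂.2) ∣ φ Q u := by
      have h1 : τ w (H (e x₁.1) (e x₁.2)) ∣ τ w (φ Q u) := map_dvd _ hx₁
      rw [τ_φ hw, hτ] at h1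
      exact (dvd_mul_left _ _).trans h1
    have hsq : H (e x₂.1) (e x₂.2) * H (e x₂.1) (e x₂.2) ∣ φ Q u * φ Q v :=
      mul_dvd_mul hdvd2 hx₂
    rw [hmul, ← Finset.mul_prod_erase s _ hx₂s] at hsq
    have hrest : H (e x₂.1) (e x₂.2) ∣ ∏ x ∈ s.erase x₂, H (e x.1) (e x.2) :=
      (mul_dvd_mul_iff_left (hirrx x₂).ne_zero).mp hsq
    have hprime₂ : Prime (H (e x₂.1) (e x₂.2)) :=
      UniqueFactorizationMonoid.irreducible_iff_prime.mp (hirrx x₂)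
    obtain ⟨x₃, hx₃, hdvd3⟩ := hprime₂.exists_mem_finset_dvd hrest
    have hx₃s : x₃ ∈ s := Finset.mem_of_mem_erase hx₃
    have hassoc23 : Associated (H (e x₂.1) (e x₂.2)) (H (e x₃.1) (e x₃.2)) :=
      (hirrx x₂).associated_of_dvd (hirrx x₃) hdvd3
    obtain ⟨hEa, hEb⟩ := hassoc hassoc23
    have hx₂mem := Finset.mem_product.mp hx₂s
    have hx₃mem := Finset.mem_product.mp hx₃s
    have h23 : x₂ = x₃ := by
      have h1 := hinjE _ hx₂mem.1 _ hx₃mem.1 hEa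
      have h2 := hinjE _ hx₂mem.2 _ hx₃mem.2 hEb
      exact Prod.ext h1 h2
    exact (Finset.mem_erase.mp hx₃).1 h23.symm

/-- The root of unity `e^{2πim/q}`. -/
def E (q : ℤ) (m : ℕ) : ℂ := Complex.exp (2 * Real.pi * Complex.I * m / q)

lemma E_ne_zero (q : ℤ) (m : ℕ) : E q m ≠ 0 := Complex.exp_ne_zero _

lemma E_pow {q : ℤ} (hq : 0 < q) (m : ℕ) : E q m ^ q.toNat = 1 := by
  have hqC : (q : ℂ) ≠ 0 := Int.cast_ne_zero.mpr hq.ne'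
  rw [E, ← Complex.exp_nat_mul]
  have hQq : ((q.toNat : ℕ) : ℂ) = (q : ℂ) := by
    have : ((q.toNat : ℤ) : ℂ) = (q : ℂ) := by
      rw [Int.toNat_of_nonneg hq.le]
    exact_mod_cast this
  have harg : ((q.toNat : ℕ) : ℂ) * (2 * Real.pi * Complex.I * m / q)
      = (m : ℂ) * (2 * Real.pi * Complex.I) := by
    rw [hQq, mul_comm ((q : ℂ)) _, div_mul_cancel₀ _ hqC]
    ring
  rw [harg]
  exact_mod_cast Complex.exp_int_mul_two_pi_mul_I (m : ℤ)

lemma E_inj {q : ℤ} (hq : 0 < q) {m m' : ℕ} (hm : m ∈ Icc 1 q.toNat)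
    (hm' : m' ∈ Icc 1 q.toNat) (hE : E q m = E q m') : m = m' := by
  have hqC : (q : ℂ) ≠ 0 := Int.cast_ne_zero.mpr hq.ne'
  rw [Finset.mem_Icc] at hm hm'
  obtain ⟨n, hn⟩ := Complex.exp_eq_exp_iff_exists_int.mp hE
  have h2πI : (2 * (Real.pi : ℂ) * Complex.I) ≠ 0 :=
    mul_ne_zero (mul_ne_zero two_ne_zero (Complex.ofReal_ne_zero.mpr Real.pi_ne_zero))
      Complex.I_ne_zero
  have hkey : (m : ℂ) = m' + n * q := by
    field_simp at hn
    apply mul_left_cancel₀ h2πI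
    linear_combination (2 * (Real.pi : ℂ) * Complex.I) * hn
  have hkey' : (m : ℤ) = m' + n * q := by exact_mod_cast hkey
  have hQq : (q.toNat : ℤ) = q := Int.toNat_of_nonneg hq.le
  rcases lt_trichotomy n 0 with hn0 | hn0 | hn0
  · have h2 : n * q ≤ -q := by
      have := mul_le_mul_of_nonneg_right (show n ≤ -1 by omega) hq.le
      linarith
    omega
  · subst hn0
    omega
  · have h2 : q ≤ n * q := by
      have := mul_le_mul_of_nonneg_right (show (1 : ℤ) ≤ n by omega) hq.le
      linarith
    omega

lemma pow_eq_one_ne_zero {Q : ℕ} (hQ : 0 < Q) {w : ℂ} (hw : w ^ Q = 1) : w ≠ 0 := by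
  rintro rfl
  rw [zero_pow hQ.ne'] at hw
  exact one_ne_zero hw.symm

end

end TS

set_option maxHeartbeats 2000000 in
set_option synthInstance.maxHeartbeats 400000 in
open TS MvPolynomial in
/-- Irreducibility of the triangular-symmetric curve `𝔽_{p/q}` of type `(p,q)` with
`gcd(p,q) = 1`, `q > 0`, `p ∉ {0, q}`: the polynomial `F` obtained by expanding
`∏_{m,n=1}^{q} (x^{p/q} + e^{2πim/q} y^{p/q} + e^{2πin/q} z^{p/q})` (and clearing
denominators when `p < 0`) is irreducible.  The fractional powers are made honest by
substituting `x = s^q`, `y = t^q`, `z = u^q` and working in the fraction field `K` of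
`ℂ[s,t,u]`, where `p`-th powers are `zpow`s; the monomial factor `(stu)^{q² max(-p,0)}`
accounts for the denominators when `p < 0`. -/
theorem stmt_12 (p q : ℤ) (hq : 0 < q) (hcop : IsCoprime p q) (hp0 : p ≠ 0)
    (hpq : p ≠ q) (F : MvPolynomial (Fin 3) ℂ)
    (hF : algebraMap (MvPolynomial (Fin 3) ℂ) (FractionRing (MvPolynomial (Fin 3) ℂ))
        (MvPolynomial.aeval (fun i => MvPolynomial.X i ^ q.toNat) F)
      = (algebraMap (MvPolynomial (Fin 3) ℂ) (FractionRing (MvPolynomial (Fin 3) ℂ))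
            (MvPolynomial.X 0 * MvPolynomial.X 1 * MvPolynomial.X 2)) ^ (q ^ 2 * max (-p) 0)
        * ∏ m ∈ Icc 1 q.toNat, ∏ n ∈ Icc 1 q.toNat,
          ((algebraMap (MvPolynomial (Fin 3) ℂ) (FractionRing (MvPolynomial (Fin 3) ℂ))
              (MvPolynomial.X 0)) ^ p
            + algebraMap (MvPolynomial (Fin 3) ℂ) (FractionRing (MvPolynomial (Fin 3) ℂ))
                (MvPolynomial.C (Complex.exp (2 * Real.pi * Complex.I * m / q)))
              * (algebraMap (MvPolynomial (Fin 3) ℂ) (FractionRing (MvPolynomial (Fin 3) ℂ))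
                  (MvPolynomial.X 1)) ^ p
            + algebraMap (MvPolynomial (Fin 3) ℂ) (FractionRing (MvPolynomial (Fin 3) ℂ))
                (MvPolynomial.C (Complex.exp (2 * Real.pi * Complex.I * n / q)))
              * (algebraMap (MvPolynomial (Fin 3) ℂ) (FractionRing (MvPolynomial (Fin 3) ℂ))
                  (MvPolynomial.X 2)) ^ p)) :
    Irreducible F := by
  classical
  have hQ0 : 0 < q.toNat := by omega
  have hP0 : 0 < p.natAbs := by omega
  set Q : ℕ := q.toNat with hQdef
  set P : ℕ := p.natAbs with hPdef
  have hqQ : (Q : ℤ) = q := by omega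
  have hcopn : Nat.Coprime P Q := by
    have hg : Int.gcd p q = 1 := Int.isCoprime_iff_gcd_eq_one.mp hcop
    have h2 : Nat.gcd p.natAbs q.natAbs = 1 := hg
    have h3 : q.natAbs = Q := by omega
    rw [Nat.Coprime, hPdef, ← h3]
    exact h2
  set j := algebraMap (MvPolynomial (Fin 3) ℂ) (FractionRing (MvPolynomial (Fin 3) ℂ)) with hjdef
  have hjinj : Function.Injective j := IsFractionRing.injective _ _
  have hjX : ∀ i : Fin 3, j (X i) ≠ 0 := fun i => (map_ne_zero_iff j hjinj).mpr (X_ne_zero i)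
  have hE0 : ∀ m : ℕ, E q m ≠ 0 := E_ne_zero q
  have hEQ : ∀ m : ℕ, E q m ^ Q = 1 := E_pow hq
  have hEinj : ∀ m ∈ Icc 1 Q, ∀ m' ∈ Icc 1 Q, E q m = E q m' → m = m' :=
    fun m hm m' hm' h => E_inj hq hm hm' h
  have hcard : (Icc 1 Q).card = Q := by rw [Nat.card_Icc]; omega
  rcases hp0.lt_or_gt with hneg | hpos
  -- ===================== CASE p < 0 =====================
  · have hPp : (P : ℤ) = -p := by omega
    set G : R3 := ∏ m ∈ Icc 1 Q, ∏ n ∈ Icc 1 Q, Hneg P (E q m) (E q n) with hGdef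
    have hkey : φ Q F = G := by
      apply hjinj
      simp only [TS.φ, TS.E]
      rw [hF, hGdef]
      simp only [TS.E, map_prod]
      have hmax : q ^ 2 * max (-p) 0 = ((Q ^ 2 * P : ℕ) : ℤ) := by
        rw [max_eq_left (by omega : (0 : ℤ) ≤ -p)]
        push_cast
        rw [hqQ, hPp]
      rw [hmax, zpow_natCast]
      have hconst : j (X 0 * X 1 * X 2) ^ (Q ^ 2 * P)
          = ∏ _m ∈ Icc 1 Q, ∏ _n ∈ Icc 1 Q, j (X 0 * X 1 * X 2) ^ P := by
        simp only [Finset.prod_const, hcard, ← pow_mul]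
        congr 1
        ring
      rw [hconst, ← Finset.prod_mul_distrib]
      refine Finset.prod_congr rfl fun m hm => ?_
      rw [← Finset.prod_mul_distrib]
      refine Finset.prod_congr rfl fun n hn => ?_
      have hzp : ∀ y : FractionRing (MvPolynomial (Fin 3) ℂ), y ^ p = (y ^ P)⁻¹ := by
        intro y
        rw [show p = -(P : ℤ) by omega, zpow_neg, zpow_natCast]
      rw [hzp, hzp, hzp]
      simp only [Hneg, map_add, map_mul, map_pow]
      have h0 := pow_ne_zero P (hjX 0)
      have h1 := pow_ne_zero P (hjX 1)
      have h2 := pow_ne_zero P (hjX 2)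
      field_simp
      ring
    have hφF : φ Q F = ∏ x ∈ Icc 1 Q ×ˢ Icc 1 Q, Hneg P (E q x.1) (E q x.2) := by
      rw [hkey, hGdef, ← Finset.prod_product']
    refine main_core hQ0 hE0 hEQ hEinj (fun ha hb => irr_Hneg hP0 ha hb)
      (fun h => assoc_Hneg hP0 h) ?_ hφF
    intro a b a' b' ha hb ha' hb' haQ hbQ ha'Q hb'Q
    obtain ⟨w1, hw1Q, hw1P⟩ := root_exists hQ0 hcopn (g := a * a'⁻¹)
      (by rw [mul_pow, inv_pow, haQ, ha'Q, inv_one, mul_one])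
    obtain ⟨w2, hw2Q, hw2P⟩ := root_exists hQ0 hcopn (g := b * b'⁻¹)
      (by rw [mul_pow, inv_pow, hbQ, hb'Q, inv_one, mul_one])
    refine ⟨![1, w1, w2], ?_, w1 ^ P * w2 ^ P,
      mul_ne_zero (pow_ne_zero _ (pow_eq_one_ne_zero hQ0 hw1Q))
        (pow_ne_zero _ (pow_eq_one_ne_zero hQ0 hw2Q)), ?_⟩
    · intro i
      fin_cases i <;> simp [hw1Q, hw2Q]
    · have hv0 : (![1, w1, w2] : Fin 3 → ℂ) 0 = 1 := rfl
      have hv1 : (![1, w1, w2] : Fin 3 → ℂ) 1 = w1 := rfl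
      have hv2 : (![1, w1, w2] : Fin 3 → ℂ) 2 = w2 := rfl
      have hi1 : a * w2 ^ P = w1 ^ P * w2 ^ P * a' := by
        rw [hw1P, hw2P]
        field_simp
      have hi2 : b * w1 ^ P = w1 ^ P * w2 ^ P * b' := by
        rw [hw1P, hw2P]
        field_simp
      have hl1 := congrArg (C : ℂ → R3) hi1
      have hl2 := congrArg (C : ℂ → R3) hi2
      simp only [map_mul, map_pow] at hl1 hl2
      simp only [TS.τ, Hneg, map_add, map_mul, map_pow, aeval_X, aeval_C,
        MvPolynomial.algebraMap_eq, hv0, hv1, hv2, map_one, one_mul]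
      linear_combination hl1 * (X 0 * X 2) ^ P + hl2 * (X 0 * X 1) ^ P
  -- ===================== CASE p > 0 =====================
  · have hPp : (P : ℤ) = p := by omega
    set G : R3 := ∏ m ∈ Icc 1 Q, ∏ n ∈ Icc 1 Q, Hpos P (E q m) (E q n) with hGdef
    have hkey : φ Q F = G := by
      apply hjinj
      simp only [TS.φ, TS.E]
      rw [hF, hGdef]
      simp only [TS.E, map_prod]
      have hmax : q ^ 2 * max (-p) 0 = 0 := by
        rw [max_eq_right (by omega : -p ≤ (0 : ℤ)), mul_zero]
      rw [hmax, zpow_zero, one_mul]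
      refine Finset.prod_congr rfl fun m hm => ?_
      refine Finset.prod_congr rfl fun n hn => ?_
      have hzp : ∀ y : FractionRing (MvPolynomial (Fin 3) ℂ), y ^ p = y ^ P := by
        intro y
        rw [show p = (P : ℤ) by omega, zpow_natCast]
      rw [hzp, hzp, hzp]
      simp only [Hpos, map_add, map_mul, map_pow]
    have hφF : φ Q F = ∏ x ∈ Icc 1 Q ×ˢ Icc 1 Q, Hpos P (E q x.1) (E q x.2) := by
      rw [hkey, hGdef, ← Finset.prod_product']
    refine main_core hQ0 hE0 hEQ hEinj (fun ha hb => irr_Hpos hP0 ha hb)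
      (fun h => assoc_Hpos hP0 h) ?_ hφF
    intro a b a' b' ha hb ha' hb' haQ hbQ ha'Q hb'Q
    obtain ⟨w1, hw1Q, hw1P⟩ := root_exists hQ0 hcopn (g := a' * a⁻¹)
      (by rw [mul_pow, inv_pow, ha'Q, haQ, inv_one, mul_one])
    obtain ⟨w2, hw2Q, hw2P⟩ := root_exists hQ0 hcopn (g := b' * b⁻¹)
      (by rw [mul_pow, inv_pow, hb'Q, hbQ, inv_one, mul_one])
    refine ⟨![1, w1, w2], ?_, 1, one_ne_zero, ?_⟩
    · intro i
      fin_cases i <;> simp [hw1Q, hw2Q]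
    · have hv0 : (![1, w1, w2] : Fin 3 → ℂ) 0 = 1 := rfl
      have hv1 : (![1, w1, w2] : Fin 3 → ℂ) 1 = w1 := rfl
      have hv2 : (![1, w1, w2] : Fin 3 → ℂ) 2 = w2 := rfl
      have hi1 : a * w1 ^ P = a' := by
        rw [hw1P]
        field_simp
      have hi2 : b * w2 ^ P = b' := by
        rw [hw2P]
        field_simp
      have hl1 := congrArg (C : ℂ → R3) hi1
      have hl2 := congrArg (C : ℂ → R3) hi2
      simp only [map_mul, map_pow] at hl1 hl2
      simp only [TS.τ, Hpos, map_add, map_mul, map_pow, aeval_X, aeval_C,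
        MvPolynomial.algebraMap_eq, hv0, hv1, hv2, map_one, one_mul]
      linear_combination hl1 * X 1 ^ P + hl2 * X 2 ^ P
end

section
/- Let ν ≥ 2 and consider a germ of irreducible ν-web W given by w^m·a_0(z,w) = ∏_{j=1}^{ν}(slope_j) where the Puiseux slopes are ζ^j c_0(z) w^{r/ν} + higher order terms, ζ = e^{2πi/ν}, c_0 ≢ 0. Then w^r c_0(z)^ν = w^m a_0(z,w) up to higher-order terms implies m ≤ r, and the multiplicity of w = 0 in the discriminant ∏_{i≠j}((ζ^i − ζ^j)c_0(z)w^{r/ν} + …) is r(ν−1); hence this multiplicity is at least m(ν−1) ≥ ν−1, with equality ν−1 if and only if m = r = 1 and w ∤ a_0. -/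
open Finset

lemma aux_prod_shift {ι : Type*} {R : Type*} [CommRing R] (s : Finset ι)
    (f : ι → PowerSeries R) (r : ℕ)
    (h : ∀ i ∈ s, ∀ k < r, PowerSeries.coeff (R := R) k (f i) = 0) :
    (∀ k < r * s.card, PowerSeries.coeff (R := R) k (∏ i ∈ s, f i) = 0) ∧
    PowerSeries.coeff (R := R) (r * s.card) (∏ i ∈ s, f i)
      = ∏ i ∈ s, PowerSeries.coeff (R := R) r (f i) := by
  classical
  have hd : ∀ i ∈ s, PowerSeries.X ^ r ∣ f i := fun i hi =>
    PowerSeries.X_pow_dvd_iff.mpr (h i hi)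
  choose g hg using fun i (hi : i ∈ s) => hd i hi
  set G : ι → PowerSeries R := fun i => if hi : i ∈ s then g i hi else 0 with hG
  have hfg : ∀ i ∈ s, f i = PowerSeries.X ^ r * G i := by
    intro i hi; simp only [hG, dif_pos hi]; exact hg i hi
  have hprod : ∏ i ∈ s, f i = PowerSeries.X ^ (r * s.card) * ∏ i ∈ s, G i := by
    rw [Finset.prod_congr rfl hfg, Finset.prod_mul_distrib, Finset.prod_const,
      ← pow_mul]
  have hcoefflead : ∀ i ∈ s, PowerSeries.coeff (R := R) r (f i)
      = PowerSeries.coeff (R := R) 0 (G i) := by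
    intro i hi
    rw [hfg i hi]
    simpa using PowerSeries.coeff_X_pow_mul (G i) r 0
  constructor
  · intro k hk
    have : PowerSeries.X ^ (r * s.card) ∣ ∏ i ∈ s, f i := ⟨∏ i ∈ s, G i, hprod⟩
    exact PowerSeries.X_pow_dvd_iff.mp this k hk
  · rw [hprod]
    have := PowerSeries.coeff_X_pow_mul (∏ i ∈ s, G i) (r * s.card) 0
    simp only [zero_add] at this
    rw [this]
    rw [Finset.prod_congr rfl hcoefflead]
    simp only [PowerSeries.coeff_zero_eq_constantCoeff]
    exact map_prod (PowerSeries.constantCoeff (R := R)) G s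

/-- Multiplicity of a totally invariant component in the discriminant of an irreducible
`ν`-web (Lemma `L:irredutivel`).  After the substitution `w = t^ν`, the Puiseux slopes
become power series `s j = ζ^j c₀(z) t^r + h.o.t.` in `t` over `R = ℂ⟦z⟧`, their product
is `t^{νm}·A` where `A = a₀(z, t^ν)` (so only coefficients of `t`-degree divisible by
`ν` occur in `A`), and `w ∤ a₀` reads `A(z,0) ≠ 0`.  Then `m ≤ r`, the discriminant
`∏_{i≠j}(sᵢ - sⱼ)` has `t`-order `ν·r(ν-1)` (i.e. `w`-multiplicity `r(ν-1)`) with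
leading coefficient `∏_{i≠j}(ζⁱ - ζʲ)·c₀^{ν(ν-1)}`, hence the multiplicity is
`r(ν-1) ≥ m(ν-1) ≥ ν-1`, with equality `ν-1` iff `m = r = 1` and `w ∤ a₀`. -/
theorem stmt_17 (ν m r : ℕ) (hν : 2 ≤ ν) (hm : 1 ≤ m)
    (ζ : ℂ) (hζ : IsPrimitiveRoot ζ ν)
    (c0 : PowerSeries ℂ) (hc0 : c0 ≠ 0)
    (s : Fin ν → PowerSeries (PowerSeries ℂ))
    (hslow : ∀ j : Fin ν, ∀ k < r, PowerSeries.coeff (R := PowerSeries ℂ) k (s j) = 0)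
    (hslead : ∀ j : Fin ν, PowerSeries.coeff (R := PowerSeries ℂ) r (s j)
      = PowerSeries.C (R := ℂ) (ζ ^ ((j : ℕ) + 1)) * c0)
    (A : PowerSeries (PowerSeries ℂ))
    (hA : ∀ k, PowerSeries.coeff (R := PowerSeries ℂ) k A ≠ 0 → ν ∣ k)
    (hprod : ∏ j, s j = PowerSeries.X ^ (ν * m) * A) :
    m ≤ r ∧
    (∀ k < ν * r * (ν - 1),
      PowerSeries.coeff (R := PowerSeries ℂ) k
        (∏ p ∈ (univ : Finset (Fin ν × Fin ν)).filter (fun p => p.1 ≠ p.2),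
          (s p.1 - s p.2)) = 0) ∧
    PowerSeries.coeff (R := PowerSeries ℂ) (ν * r * (ν - 1))
        (∏ p ∈ (univ : Finset (Fin ν × Fin ν)).filter (fun p => p.1 ≠ p.2),
          (s p.1 - s p.2))
      = PowerSeries.C (R := ℂ)
          (∏ p ∈ (univ : Finset (Fin ν × Fin ν)).filter (fun p => p.1 ≠ p.2),
            (ζ ^ ((p.1 : ℕ) + 1) - ζ ^ ((p.2 : ℕ) + 1))) * c0 ^ (ν * (ν - 1)) ∧
    ν - 1 ≤ m * (ν - 1) ∧ m * (ν - 1) ≤ r * (ν - 1) ∧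
    (r * (ν - 1) = ν - 1 ↔
      m = 1 ∧ r = 1 ∧ PowerSeries.coeff (R := PowerSeries ℂ) 0 A ≠ 0) := by
  classical
  have hν0 : ν ≠ 0 := by omega
  -- Leading coefficient of the product of the slopes
  have hPS := aux_prod_shift (univ : Finset (Fin ν)) s r (fun j _ => hslow j)
  have hcard : (univ : Finset (Fin ν)).card = ν := by simp
  rw [hcard] at hPS
  have hlead : PowerSeries.coeff (R := PowerSeries ℂ) (r * ν) (∏ j, s j)
      = PowerSeries.C (R := ℂ) (∏ j : Fin ν, ζ ^ ((j : ℕ) + 1)) * c0 ^ ν := by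
    rw [hPS.2, Finset.prod_congr rfl (fun j _ => hslead j),
      Finset.prod_mul_distrib, Finset.prod_const, hcard,
      map_prod (PowerSeries.C (R := ℂ)) _ univ]
  have hCne : ∀ x : ℂ, x ≠ 0 → (PowerSeries.C (R := ℂ) x : PowerSeries ℂ) ≠ 0 := by
    intro x hx h
    exact hx (by simpa using congrArg (PowerSeries.constantCoeff (R := ℂ)) h)
  have hζ0 : ζ ≠ 0 := hζ.ne_zero hν0
  have hleadne : PowerSeries.C (R := ℂ) (∏ j : Fin ν, ζ ^ ((j : ℕ) + 1)) * c0 ^ ν ≠ 0 :=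
    mul_ne_zero (hCne _ (Finset.prod_ne_zero_iff.mpr fun j _ => pow_ne_zero _ hζ0))
      (pow_ne_zero _ hc0)
  -- m ≤ r
  have hmr : m ≤ r := by
    by_contra hlt
    push_neg at hlt
    have hdvd : PowerSeries.X ^ (ν * m) ∣ (PowerSeries.X ^ (ν * m) * A :
        PowerSeries (PowerSeries ℂ)) := Dvd.intro _ rfl
    have := PowerSeries.X_pow_dvd_iff.mp hdvd (r * ν)
      (by nlinarith)
    rw [← hprod, hlead] at this
    exact hleadne this
  -- the off-diagonal set
  set F := (univ : Finset (Fin ν × Fin ν)).filter (fun p => p.1 ≠ p.2) with hF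
  have hFcard : F.card = ν * (ν - 1) := by
    have h1 : F = (univ : Finset (Fin ν)).offDiag := by
      ext p; simp [hF, Finset.mem_offDiag]
    rw [h1, Finset.offDiag_card, hcard]
    cases ν with
    | zero => simp
    | succ n => simp [Nat.succ_mul, Nat.mul_succ]
  have hDS := aux_prod_shift F (fun p => s p.1 - s p.2) r
    (fun p _ k hk => by simp [hslow p.1 k hk, hslow p.2 k hk])
  rw [hFcard] at hDS
  have hrc : r * (ν * (ν - 1)) = ν * r * (ν - 1) := by ring
  rw [hrc] at hDS
  have hdlead : PowerSeries.coeff (R := PowerSeries ℂ) (ν * r * (ν - 1))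
      (∏ p ∈ F, (s p.1 - s p.2))
      = PowerSeries.C (R := ℂ) (∏ p ∈ F, (ζ ^ ((p.1 : ℕ) + 1) - ζ ^ ((p.2 : ℕ) + 1)))
        * c0 ^ (ν * (ν - 1)) := by
    rw [hDS.2]
    have : ∀ p ∈ F, PowerSeries.coeff (R := PowerSeries ℂ) r (s p.1 - s p.2)
        = PowerSeries.C (R := ℂ) (ζ ^ ((p.1 : ℕ) + 1) - ζ ^ ((p.2 : ℕ) + 1)) * c0 := by
      intro p _
      rw [map_sub, hslead p.1, hslead p.2, map_sub, sub_mul]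
    rw [Finset.prod_congr rfl this, Finset.prod_mul_distrib, Finset.prod_const,
      hFcard, map_prod (PowerSeries.C (R := ℂ)) _ F]
  refine ⟨hmr, hDS.1, hdlead, by simpa using Nat.mul_le_mul_right (ν - 1) hm, Nat.mul_le_mul_right _ hmr, ?_⟩
  constructor
  · intro heq
    have hr1 : r = 1 := by
      have hν1 : 1 ≤ ν - 1 := by omega
      nlinarith [Nat.one_le_iff_ne_zero.mp hν1]
    have hm1 : m = 1 := le_antisymm (hmr.trans_eq hr1) hm
    refine ⟨hm1, hr1, ?_⟩
    have hc : PowerSeries.coeff (R := PowerSeries ℂ) (r * ν) (∏ j, s j)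
        = PowerSeries.coeff (R := PowerSeries ℂ) 0 A := by
      rw [hprod, hm1, hr1, Nat.one_mul, Nat.mul_one]
      simpa using PowerSeries.coeff_X_pow_mul A ν 0
    intro h0
    rw [hc, h0] at hlead
    exact hleadne hlead.symm
  · rintro ⟨-, hr1, -⟩
    rw [hr1, Nat.one_mul]
end

section
/- Let U(p,0;0) ≢ 0 and suppose F̌(p,q;x) = q + a_1(p,q)q x + ⋯ + a_{ν-1}(p,q)q x^{ν-1} + a_ν(p,q)x^ν + ⋯ + a_d(p,q)x^d with a_ν(p,0) ≢ 0 and all higher coefficients holomorphic. Then by the Weierstrass preparation theorem there exist a unit U and holomorphic functions ā_0,…,ā_{ν-1} such that F̌(p,q;x) = U(p,q;x)·(x^ν − q(ā_{ν-1}(p,q)x^{ν-1} + ⋯ + ā_0(p,q))). -/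
noncomputable section

namespace Stmt18

open PowerSeries

abbrev R : Type := MvPowerSeries (Fin 2) ℂ
abbrev S : Type := PowerSeries R

def q : R := MvPowerSeries.X 1

lemma qpow_dvd_iff {k : ℕ} {r : R} :
    q ^ k ∣ r ↔ ∀ m : Fin 2 →₀ ℕ, m 1 < k → MvPowerSeries.coeff m r = 0 := by
  constructor
  · rintro ⟨t, rfl⟩ m hm
    rw [q, MvPowerSeries.X_pow_eq, MvPowerSeries.coeff_monomial_mul, if_neg]
    intro hle
    exact absurd (Finsupp.single_le_iff.mp hle) hm.not_ge
  · intro h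
    refine ⟨@id R fun m => MvPowerSeries.coeff (m + Finsupp.single 1 k) r, ?_⟩
    apply MvPowerSeries.ext
    intro m
    rw [q, MvPowerSeries.X_pow_eq, MvPowerSeries.coeff_monomial_mul]
    split_ifs with hle
    · simp only [one_mul, MvPowerSeries.coeff_apply, id_eq]
      exact (congrArg r (tsub_add_cancel_of_le hle)).symm
    · exact h m (lt_of_not_ge (fun hk => hle (Finsupp.single_le_iff.mpr hk)))

lemma C_dvd_iff {a : R} {H : S} : C (R := R) a ∣ H ↔ ∀ i, a ∣ PowerSeries.coeff (R := R) i H := by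
  constructor
  · rintro ⟨t, rfl⟩ i
    rw [coeff_C_mul]
    exact Dvd.intro _ rfl
  · intro h
    refine ⟨PowerSeries.mk fun i => (h i).choose, ?_⟩
    apply PowerSeries.ext
    intro i
    rw [coeff_C_mul, coeff_mk]
    exact (h i).choose_spec

def trunc' (ν : ℕ) (H : S) : S := PowerSeries.mk fun i => if i < ν then PowerSeries.coeff (R := R) i H else 0
def sft (ν : ℕ) (H : S) : S := PowerSeries.mk fun i => PowerSeries.coeff (R := R) (i + ν) H

lemma trunc'_add_sft (ν : ℕ) (H : S) : trunc' ν H + X ^ ν * sft ν H = H := by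
  apply PowerSeries.ext
  intro i
  rw [map_add, coeff_X_pow_mul']
  rcases lt_or_ge i ν with h | h
  · simp [trunc', coeff_mk, h, h.not_ge]
  · simp [trunc', sft, coeff_mk, h.not_gt, h, tsub_add_cancel_of_le h]

lemma trunc'_sub (ν : ℕ) (A B : S) : trunc' ν (A - B) = trunc' ν A - trunc' ν B := by
  apply PowerSeries.ext
  intro i
  simp only [trunc', coeff_mk, map_sub]
  split_ifs <;> simp

lemma sft_sub (ν : ℕ) (A B : S) : sft ν (A - B) = sft ν A - sft ν B := by
  apply PowerSeries.ext
  intro i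
  simp [sft, coeff_mk, map_sub]

lemma dvd_trunc' {a : R} {H : S} (ν : ℕ) (h : C (R := R) a ∣ H) : C (R := R) a ∣ trunc' ν H := by
  rw [C_dvd_iff] at h ⊢
  intro i
  simp only [trunc', coeff_mk]
  split_ifs
  · exact h i
  · exact dvd_zero a

lemma dvd_sft {a : R} {H : S} (ν : ℕ) (h : C (R := R) a ∣ H) : C (R := R) a ∣ sft ν H := by
  rw [C_dvd_iff] at h ⊢
  intro i
  simpa [sft, coeff_mk] using h (i + ν)

def Phi (ν : ℕ) (D : S) (x : S × S) : S × S :=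
  (-(trunc' ν (D + C (R := R) q * x.2 * x.1)), sft ν (D + C (R := R) q * x.2 * x.1))

lemma contract (ν : ℕ) (D : S) {k : ℕ} {x y : S × S}
    (h1 : C (R := R) (q ^ k) ∣ x.1 - y.1) (h2 : C (R := R) (q ^ k) ∣ x.2 - y.2) :
    C (R := R) (q ^ (k + 1)) ∣ (Phi ν D x).1 - (Phi ν D y).1 ∧
      C (R := R) (q ^ (k + 1)) ∣ (Phi ν D x).2 - (Phi ν D y).2 := by
  have hG : C (R := R) (q ^ (k + 1)) ∣
      (D + C (R := R) q * x.2 * x.1) - (D + C (R := R) q * y.2 * y.1) := by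
    have e : (D + C (R := R) q * x.2 * x.1) - (D + C (R := R) q * y.2 * y.1)
        = C (R := R) q * (x.2 * (x.1 - y.1) + (x.2 - y.2) * y.1) := by ring
    rw [e, pow_succ', map_mul]
    exact mul_dvd_mul_left _ (dvd_add (h1.mul_left _) (h2.mul_right _))
  constructor
  · simp only [Phi, neg_sub_neg]
    rw [← trunc'_sub, ← neg_sub]
    exact dvd_trunc' ν hG.neg_right
  · simp only [Phi]
    rw [← sft_sub]
    exact dvd_sft ν hG

def seq (ν : ℕ) (D : S) : ℕ → S × S
  | 0 => (0, 0)
  | k + 1 => Phi ν D (seq ν D k)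

lemma seq_succ_sub (ν : ℕ) (D : S) (k : ℕ) :
    C (R := R) (q ^ k) ∣ (seq ν D (k + 1)).1 - (seq ν D k).1 ∧
      C (R := R) (q ^ k) ∣ (seq ν D (k + 1)).2 - (seq ν D k).2 := by
  induction k with
  | zero => simp
  | succ k ih => exact contract ν D ih.1 ih.2

lemma seq_sub (ν : ℕ) (D : S) {k l : ℕ} (h : k ≤ l) :
    C (R := R) (q ^ k) ∣ (seq ν D l).1 - (seq ν D k).1 ∧
      C (R := R) (q ^ k) ∣ (seq ν D l).2 - (seq ν D k).2 := by
  induction l with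
  | zero => simp [Nat.le_zero.mp h]
  | succ l ih =>
    rcases Nat.lt_succ_iff_lt_or_eq.mp (Nat.lt_succ_of_le h) with h' | h'
    · have hk : k ≤ l := Nat.lt_succ_iff.mp h'
      have ih' := ih hk
      have hs := seq_succ_sub ν D l
      have hl : C (R := R) (q ^ k) ∣ (C (R := R) (q ^ l) : S) :=
        map_dvd (C (R := R)) (pow_dvd_pow q hk)
      constructor
      · have := dvd_add (hl.trans hs.1) ih'.1
        rwa [sub_add_sub_cancel] at this
      · have := dvd_add (hl.trans hs.2) ih'.2
        rwa [sub_add_sub_cancel] at this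
    · simp [h']


def limit (f : ℕ → S) : S :=
  PowerSeries.mk fun i =>
    (@id R fun m : Fin 2 →₀ ℕ => MvPowerSeries.coeff m (PowerSeries.coeff (R := R) i (f (m 1 + 1))))

lemma coeff_eq_of_dvd {k : ℕ} {A B : S} (h : C (R := R) (q ^ k) ∣ A - B) {i : ℕ}
    {m : Fin 2 →₀ ℕ} (hm : m 1 < k) :
    MvPowerSeries.coeff m (PowerSeries.coeff (R := R) i A)
      = MvPowerSeries.coeff m (PowerSeries.coeff (R := R) i B) := by
  have h1 : q ^ k ∣ PowerSeries.coeff (R := R) i A - PowerSeries.coeff (R := R) i B := by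
    have := C_dvd_iff.mp h i
    rwa [map_sub] at this
  have h2 := qpow_dvd_iff.mp h1 m hm
  rw [map_sub, sub_eq_zero] at h2
  exact h2

lemma limit_spec {f : ℕ → S}
    (hf : ∀ k l, k ≤ l → C (R := R) (q ^ k) ∣ f l - f k) (k : ℕ) :
    C (R := R) (q ^ k) ∣ limit f - f k := by
  rw [C_dvd_iff]
  intro i
  rw [map_sub, qpow_dvd_iff]
  intro m hm
  rw [map_sub, sub_eq_zero]
  have e1 := coeff_eq_of_dvd (hf k (max k (m 1 + 1)) (le_max_left _ _)) (i := i) (m := m) hm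
  have e2 := coeff_eq_of_dvd (hf (m 1 + 1) (max k (m 1 + 1)) (le_max_right _ _)) (i := i)
    (m := m) (Nat.lt_succ_self _)
  have : MvPowerSeries.coeff m (PowerSeries.coeff (R := R) i (limit f))
      = MvPowerSeries.coeff m (PowerSeries.coeff (R := R) i (f (m 1 + 1))) := by
    rw [limit, PowerSeries.coeff_mk]; rfl
  rw [this, ← e2, e1]

lemma eq_of_forall_dvd {A B : S} (h : ∀ k, C (R := R) (q ^ k) ∣ A - B) : A = B := by
  apply PowerSeries.ext
  intro i
  apply MvPowerSeries.ext
  intro m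
  exact coeff_eq_of_dvd (h (m 1 + 1)) (Nat.lt_succ_self _)

def Bl (ν : ℕ) (D : S) : S := limit fun k => (seq ν D k).1
def Vl (ν : ℕ) (D : S) : S := limit fun k => (seq ν D k).2

lemma fixed (ν : ℕ) (D : S) :
    Bl ν D = (Phi ν D (Bl ν D, Vl ν D)).1 ∧ Vl ν D = (Phi ν D (Bl ν D, Vl ν D)).2 := by
  have hB : ∀ k, C (R := R) (q ^ k) ∣ Bl ν D - (seq ν D k).1 :=
    limit_spec fun k l h => (seq_sub ν D h).1
  have hV : ∀ k, C (R := R) (q ^ k) ∣ Vl ν D - (seq ν D k).2 :=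
    limit_spec fun k l h => (seq_sub ν D h).2
  have key : ∀ k : ℕ,
      C (R := R) (q ^ k) ∣ Bl ν D - (Phi ν D (Bl ν D, Vl ν D)).1 ∧
      C (R := R) (q ^ k) ∣ Vl ν D - (Phi ν D (Bl ν D, Vl ν D)).2 := by
    intro k
    have hc := contract ν D (x := (seq ν D k)) (y := (Bl ν D, Vl ν D))
      (by rw [← neg_sub]; exact (hB k).neg_right) (by rw [← neg_sub]; exact (hV k).neg_right)
    have hd : C (R := R) (q ^ k) ∣ (C (R := R) (q ^ (k + 1)) : S) :=
      map_dvd (C (R := R)) (pow_dvd_pow q k.le_succ)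
    constructor
    · have := dvd_add (hd.trans (hB (k + 1))) (hd.trans hc.1)
      rw [show (seq ν D (k + 1)).1 = (Phi ν D (seq ν D k)).1 from rfl] at this
      rwa [sub_add_sub_cancel] at this
    · have := dvd_add (hd.trans (hV (k + 1))) (hd.trans hc.2)
      rw [show (seq ν D (k + 1)).2 = (Phi ν D (seq ν D k)).2 from rfl] at this
      rwa [sub_add_sub_cancel] at this
  exact ⟨eq_of_forall_dvd fun k => (key k).1, eq_of_forall_dvd fun k => (key k).2⟩


lemma sum_repr (ν : ℕ) (H : S) (h : ∀ i, ν ≤ i → PowerSeries.coeff (R := R) i H = 0) :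
    H = ∑ i : Fin ν, C (R := R) (PowerSeries.coeff (R := R) (i : ℕ) H) * X ^ (i : ℕ) := by
  apply PowerSeries.ext
  intro j
  rw [map_sum]
  rcases lt_or_ge j ν with hj | hj
  · rw [Finset.sum_eq_single (⟨j, hj⟩ : Fin ν)]
    · simp [coeff_C_mul, coeff_X_pow]
    · intro b _ hb
      rw [coeff_C_mul, coeff_X_pow, if_neg, mul_zero]
      exact fun e => hb (Fin.ext e.symm)
    · intro hj'; exact absurd (Finset.mem_univ _) hj'
  · rw [h j hj]
    symm
    apply Finset.sum_eq_zero
    intro b _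
    rw [coeff_C_mul, coeff_X_pow, if_neg, mul_zero]
    exact fun e => absurd (e ▸ b.isLt) hj.not_gt

end Stmt18

end

open Stmt18 in
/-- Weierstrass preparation for the dual web near the line dual to a radial singularity
(Proposition `rad33`).  The germ `F̌(p,q;x) = q + a₁(p,q)q x + ⋯ + a_{ν-1}(p,q)q x^{ν-1}
+ a_ν(p,q)x^ν + ⋯ + a_d(p,q)x^d` at a generic point of `{q = 0}` is modelled as a
polynomial of degree `≤ d` in `x` over the ring `R = ℂ⟦p,q⟧` of germs (variable `0` is
`p`, variable `1` is `q`): its coefficients of index `< ν` are divisible by `q`, the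
constant one equals `q`, and the `ν`-th one is a unit (that is, `a_ν(p₀,0) ≠ 0` at the
chosen generic point).  Then `F̌ = U·(x^ν - q(ā_{ν-1}x^{ν-1} + ⋯ + ā₀))` with `U` a
unit. -/
theorem stmt_18 (ν d : ℕ) (hν : 1 ≤ ν) (hd : ν ≤ d)
    (F : PowerSeries (MvPowerSeries (Fin 2) ℂ))
    (h0 : PowerSeries.coeff (R := MvPowerSeries (Fin 2) ℂ) 0 F = MvPowerSeries.X 1)
    (hdivq : ∀ i < ν, (MvPowerSeries.X 1 : MvPowerSeries (Fin 2) ℂ) ∣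
      PowerSeries.coeff (R := MvPowerSeries (Fin 2) ℂ) i F)
    (hunit : MvPowerSeries.constantCoeff (σ := Fin 2) (R := ℂ)
      (PowerSeries.coeff (R := MvPowerSeries (Fin 2) ℂ) ν F) ≠ 0)
    (hpoly : ∀ i > d, PowerSeries.coeff (R := MvPowerSeries (Fin 2) ℂ) i F = 0) :
    ∃ (U : PowerSeries (MvPowerSeries (Fin 2) ℂ)) (b : Fin ν → MvPowerSeries (Fin 2) ℂ),
      IsUnit U ∧
      F = U * (PowerSeries.X ^ ν
        - PowerSeries.C (R := MvPowerSeries (Fin 2) ℂ) (MvPowerSeries.X 1)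
          * ∑ i : Fin ν, PowerSeries.C (R := MvPowerSeries (Fin 2) ℂ) (b i)
              * PowerSeries.X ^ (i : ℕ)) := by
  classical
  set E : S := PowerSeries.mk fun i => if h : i < ν then (hdivq i h).choose else 0 with hE
  set W : S := sft ν F with hW
  have hF : F = PowerSeries.C (R := R) q * E + PowerSeries.X ^ ν * W := by
    apply PowerSeries.ext
    intro i
    rw [map_add, PowerSeries.coeff_C_mul, PowerSeries.coeff_X_pow_mul']
    rcases lt_or_ge i ν with h | h
    · rw [if_neg (not_le.mpr h), add_zero, hE, PowerSeries.coeff_mk, dif_pos h]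
      exact (hdivq i h).choose_spec
    · rw [if_pos h, hE, PowerSeries.coeff_mk, dif_neg (not_lt.mpr h), mul_zero, zero_add,
        hW, sft, PowerSeries.coeff_mk, tsub_add_cancel_of_le h]
  have hWu : IsUnit W := by
    rw [PowerSeries.isUnit_iff_constantCoeff, MvPowerSeries.isUnit_iff_constantCoeff]
    have e : PowerSeries.constantCoeff (R := R) W = PowerSeries.coeff (R := R) ν F := by
      rw [← PowerSeries.coeff_zero_eq_constantCoeff, hW, sft, PowerSeries.coeff_mk, zero_add]
    rw [e]
    exact isUnit_iff_ne_zero.mpr hunit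
  obtain ⟨u, hu⟩ := hWu
  set D : S := (↑u⁻¹ : S) * E with hD
  set B : S := Bl ν D with hBdef
  set V : S := Vl ν D with hVdef
  have hB' : B = -(trunc' ν (D + PowerSeries.C (R := R) q * V * B)) := (fixed ν D).1
  have hV' : V = sft ν (D + PowerSeries.C (R := R) q * V * B) := (fixed ν D).2
  have hdecomp := trunc'_add_sft ν (D + PowerSeries.C (R := R) q * V * B)
  have key : PowerSeries.X ^ ν * V = D + PowerSeries.C (R := R) q * V * B + B := by
    linear_combination hdecomp - hB' + PowerSeries.X ^ ν * hV'
  have huinv : W * (↑u⁻¹ : S) = 1 := by rw [← hu]; exact_mod_cast u.mul_inv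
  have hVu : IsUnit (1 + PowerSeries.C (R := R) q * V) := by
    rw [PowerSeries.isUnit_iff_constantCoeff, map_add, map_one, map_mul,
      PowerSeries.constantCoeff_C, MvPowerSeries.isUnit_iff_constantCoeff, map_add, map_one,
      map_mul]
    rw [show MvPowerSeries.constantCoeff (σ := Fin 2) (R := ℂ) q = 0 from MvPowerSeries.constantCoeff_X 1]
    simp
  have hBhigh : ∀ i, ν ≤ i → PowerSeries.coeff (R := R) i B = 0 := by
    intro i hi
    rw [hB', map_neg, trunc', PowerSeries.coeff_mk, if_neg (not_lt.mpr hi), neg_zero]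
  refine ⟨W * (1 + PowerSeries.C (R := R) q * V), fun i => PowerSeries.coeff (R := R) (i : ℕ) B,
    (IsUnit.of_mul_eq_one (a := W) _ huinv).mul hVu, ?_⟩
  rw [show (MvPowerSeries.X 1 : MvPowerSeries (Fin 2) ℂ) = q from rfl,
    ← sum_repr ν B hBhigh]
  linear_combination hF - PowerSeries.C (R := R) q * W * key - PowerSeries.C (R := R) q * E * huinv
end
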